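/- arXiv:1006.0900 — 2 statements merged into one kernel-verified Lean document; each statement's English description precedes it below -/
import Mathlib

section
/- Let μ be a nontrivial probability measure on the unit circle with monic orthogonal polynomials Φ_n, and fix λ > 0. Suppose (a) μ has normal L²-derivative behavior, and (b) μ is in the Szegő class, i.e., lim_{n→∞} ‖Φ_n‖_{L²(dμ)} > 0. Then (i) σ_n² / ‖Φ_n‖²_{L²(dμ)} → 1 + λ as n → ∞, and (ii) ‖S_n − Φ_n‖²_{S,n} → 0 as n → ∞, where σ_n and S_n are the minimal Sobolev norm and the Sobolev minimizer among monic polynomials of degree n. -/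
open MeasureTheory Polynomial Filter Topology ComplexConjugate

noncomputable section

/-- The reversed (Szegő `*`-transformed) polynomial of a degree-`n` polynomial:
`P*(z) = z^n conj(P(1/conj z))`, i.e. the coefficients are conjugated and reversed. -/
def starPoly (n : ℕ) (P : Polynomial ℂ) : Polynomial ℂ :=
  (P.map (starRingEnd ℂ)).reflect n

/-- The `L²(dμ)` norm of a polynomial. -/
def l2norm (μ : Measure ℂ) (P : Polynomial ℂ) : ℝ :=
  (∫ z, ‖P.eval z‖ ^ 2 ∂μ) ^ (1 / 2 : ℝ)

/-- `φ` is the sequence of orthonormal polynomials for the measure `μ`: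
`φ n` has degree `n`, a positive (real) leading coefficient, and the family
is orthonormal in `L²(dμ)`. -/
structure IsOPUC (μ : Measure ℂ) (φ : ℕ → Polynomial ℂ) : Prop where
  deg : ∀ n : ℕ, (φ n).degree = n
  lead_re_pos : ∀ n : ℕ, 0 < ((φ n).leadingCoeff).re
  lead_im_zero : ∀ n : ℕ, ((φ n).leadingCoeff).im = 0
  orth : ∀ m n : ℕ,
    ∫ z, conj ((φ m).eval z) * (φ n).eval z ∂μ = if m = n then 1 else 0

/-- The monic orthogonal polynomials `Φ_n` associated to the orthonormal ones. -/
def monicOP (φ : ℕ → Polynomial ℂ) (n : ℕ) : Polynomial ℂ :=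
  Polynomial.C ((φ n).leadingCoeff)⁻¹ * φ n

/-- The Verblunsky coefficients `α_n = -conj (Φ_{n+1}(0))`. -/
def verblunsky (φ : ℕ → Polynomial ℂ) (n : ℕ) : ℂ :=
  -conj ((monicOP φ (n + 1)).eval 0)

/-- The measure lives on the unit circle `∂𝔻`. -/
def OnCircle (μ : Measure ℂ) : Prop := μ (Metric.sphere (0 : ℂ) 1)ᶜ = 0

/-- The measure is nontrivial: it is not supported on any finite set
(equivalently, its support is infinite). -/
def NontrivialSupport (μ : Measure ℂ) : Prop :=
  ∀ s : Finset ℂ, μ ((↑s : Set ℂ))ᶜ ≠ 0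

/-- `μ` has normal `L²`-derivative behavior: `‖φ_n'‖_{L²(dμ)} / n → 1`. -/
def NormalBehavior (μ : Measure ℂ) (φ : ℕ → Polynomial ℂ) : Prop :=
  Tendsto (fun n : ℕ => l2norm μ (derivative (φ n)) / n) atTop (𝓝 1)

/-- The squared Sobolev norm `‖P‖²_{S,n} = ∫|P|²dμ + (λ/n²)∫|P'|²dμ`. -/
def sobNormSq (μ : Measure ℂ) (lam : ℝ) (n : ℕ) (P : Polynomial ℂ) : ℝ :=
  (∫ z, ‖P.eval z‖ ^ 2 ∂μ) + lam / (n : ℝ) ^ 2 * ∫ z, ‖(derivative P).eval z‖ ^ 2 ∂μ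


def pL2 (μ : Measure ℂ) (P : Polynomial ℂ) : ℝ := ∫ z, ‖P.eval z‖ ^ 2 ∂μ

lemma aux_ae_sphere {μ : Measure ℂ} (hc : OnCircle μ) :
    ∀ᵐ z ∂μ, z ∈ Metric.sphere (0 : ℂ) 1 := by
  rw [MeasureTheory.ae_iff]
  simpa [OnCircle, Set.compl_def] using hc

lemma aux_integrable {μ : Measure ℂ} [IsFiniteMeasure μ] (hc : OnCircle μ)
    {E : Type*} [NormedAddCommGroup E] {f : ℂ → E} (hf : Continuous f) :
    Integrable f μ := by
  obtain ⟨C, hC⟩ := (isCompact_sphere (0:ℂ) 1).exists_bound_of_continuousOn hf.continuousOn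
  refine (integrable_const C).mono' hf.aestronglyMeasurable ?_
  filter_upwards [aux_ae_sphere hc] with z hz using hC z hz

lemma pL2_nonneg (μ : Measure ℂ) (P : Polynomial ℂ) : 0 ≤ pL2 μ P :=
  integral_nonneg fun z => by positivity

lemma aux_cont_sq (P : Polynomial ℂ) : Continuous fun z => ‖P.eval z‖ ^ 2 :=
  (P.continuous.norm).pow 2

lemma aux_cont_mul (P Q : Polynomial ℂ) : Continuous fun z => conj (P.eval z) * Q.eval z :=
  (Complex.continuous_conj.comp P.continuous).mul Q.continuous

lemma l2norm_sq (μ : Measure ℂ) (P : Polynomial ℂ) : l2norm μ P ^ 2 = pL2 μ P := by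
  rw [l2norm, show (∫ z, ‖P.eval z‖ ^ 2 ∂μ) = pL2 μ P from rfl,
    ← Real.rpow_natCast _ 2, ← Real.rpow_mul (pL2_nonneg μ P)]
  norm_num

lemma pL2_C_mul (μ : Measure ℂ) (c : ℂ) (P : Polynomial ℂ) :
    pL2 μ (C c * P) = ‖c‖ ^ 2 * pL2 μ P := by
  simp only [pL2, eval_mul, eval_C, norm_mul, mul_pow]
  exact integral_const_mul _ _

lemma pL2_add {μ : Measure ℂ} [IsFiniteMeasure μ] (hc : OnCircle μ) (P Q : Polynomial ℂ) :
    pL2 μ (P + Q) = pL2 μ P + 2 * (∫ z, conj (P.eval z) * Q.eval z ∂μ).re + pL2 μ Q := by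
  have h1 : pL2 μ (P + Q)
      = ∫ z, (‖P.eval z‖ ^ 2 + 2 * (conj (P.eval z) * Q.eval z).re + ‖Q.eval z‖ ^ 2) ∂μ := by
    refine integral_congr_ae (Filter.Eventually.of_forall fun z => ?_)
    simpa [RCLike.inner_apply, mul_comm] using @norm_add_sq ℂ ℂ _ _ _ (P.eval z) (Q.eval z)
  have hi1 := aux_integrable hc (aux_cont_sq P)
  have hi3 := aux_integrable hc (aux_cont_sq Q)
  have hiC := aux_integrable hc (aux_cont_mul P Q)
  have hi2 : Integrable (fun z => 2 * (conj (P.eval z) * Q.eval z).re) μ :=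
    (hiC.re).const_mul 2
  have hi12 : Integrable (fun z => ‖P.eval z‖ ^ 2 + 2 * (conj (P.eval z) * Q.eval z).re) μ :=
    hi1.add hi2
  rw [h1, integral_add hi12 hi3, integral_add hi1 hi2, integral_const_mul]
  have : ∫ z, (conj (P.eval z) * Q.eval z).re ∂μ = (∫ z, conj (P.eval z) * Q.eval z ∂μ).re :=
    (Complex.reCLM.integral_comp_comm hiC)
  rw [this]
  simp only [pL2]
  try ring

lemma pL2_neg (μ : Measure ℂ) (Q : Polynomial ℂ) : pL2 μ (-Q) = pL2 μ Q := by
  simp [pL2]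

lemma pL2_parallelogram {μ : Measure ℂ} [IsFiniteMeasure μ] (hc : OnCircle μ) (P Q : Polynomial ℂ) :
    pL2 μ (P - Q) = 2 * pL2 μ P + 2 * pL2 μ Q - pL2 μ (P + Q) := by
  have h1 := pL2_add hc P Q
  have h2 := pL2_add hc P (-Q)
  rw [pL2_neg] at h2
  have h4 : (fun z => conj (P.eval z) * (-Q).eval z) =
      fun z => -(conj (P.eval z) * Q.eval z) := by
    funext z; simp
  rw [h4, integral_neg, Complex.neg_re] at h2
  rw [sub_eq_add_neg P Q, h2]
  linarith

variable {μ : Measure ℂ} {φ : ℕ → Polynomial ℂ}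

lemma IsOPUC.lead_ne (hφ : IsOPUC μ φ) (n : ℕ) : (φ n).leadingCoeff ≠ 0 := fun h => by
  simpa [h] using (hφ.lead_re_pos n)

lemma monicOP_monic (hφ : IsOPUC μ φ) (n : ℕ) : (monicOP φ n).Monic := by
  unfold monicOP Polynomial.Monic
  rw [leadingCoeff_mul, leadingCoeff_C]
  exact inv_mul_cancel₀ (hφ.lead_ne n)

lemma monicOP_degree (hφ : IsOPUC μ φ) (n : ℕ) : (monicOP φ n).degree = n := by
  unfold monicOP
  rw [degree_mul, degree_C (inv_ne_zero (hφ.lead_ne n)), hφ.deg n, zero_add]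

lemma orth_lt [IsFiniteMeasure μ] (hc : OnCircle μ) (hφ : IsOPUC μ φ) (n : ℕ) :
    ∀ d : ℕ, ∀ Q : Polynomial ℂ, Q.natDegree ≤ d → Q.degree < n →
      ∫ z, conj ((φ n).eval z) * Q.eval z ∂μ = 0 := by
  intro d
  induction d using Nat.strong_induction_on with
  | _ d ih =>
    intro Q hQd hQn
    rcases eq_or_ne Q 0 with rfl | hQ0
    · simp
    have hdegQ : Q.degree = (Q.natDegree : WithBot ℕ) := degree_eq_natDegree hQ0
    have hen : Q.natDegree < n := by
      have := hdegQ ▸ hQn; exact_mod_cast this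
    set e := Q.natDegree with he
    set c : ℂ := Q.leadingCoeff * ((φ e).leadingCoeff)⁻¹ with hcdef
    have hc0 : c ≠ 0 := mul_ne_zero (leadingCoeff_ne_zero.mpr hQ0) (inv_ne_zero (hφ.lead_ne e))
    have hdeg : (C c * φ e).degree = Q.degree := by
      rw [degree_mul, degree_C hc0, hφ.deg e, zero_add, hdegQ]
    have hlead : (C c * φ e).leadingCoeff = Q.leadingCoeff := by
      rw [leadingCoeff_mul, leadingCoeff_C, hcdef, mul_assoc,
        inv_mul_cancel₀ (hφ.lead_ne e), mul_one]
    have hQ'deg : (Q - C c * φ e).degree < Q.degree :=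
      degree_sub_lt hdeg.symm hQ0 hlead.symm
    set Q' := Q - C c * φ e with hQ'def
    have hsplit : Q = Q' + C c * φ e := by ring
    have hint1 : Integrable (fun z => conj ((φ n).eval z) * Q'.eval z) μ :=
      aux_integrable hc (aux_cont_mul _ _)
    have hint2 : Integrable (fun z => conj ((φ n).eval z) * (C c * φ e).eval z) μ :=
      aux_integrable hc (aux_cont_mul _ _)
    have hIQ' : ∫ z, conj ((φ n).eval z) * Q'.eval z ∂μ = 0 := by
      rcases eq_or_ne Q' 0 with h0 | h0
      · simp [h0]
      · have hlt : Q'.natDegree < Q.natDegree := by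
          have := hQ'deg
          rw [degree_eq_natDegree h0, hdegQ] at this
          exact_mod_cast this
        exact ih Q'.natDegree (lt_of_lt_of_le hlt hQd) Q' le_rfl
          (hQ'deg.trans hQn)
    have hIe : ∫ z, conj ((φ n).eval z) * (C c * φ e).eval z ∂μ = 0 := by
      have : (fun z => conj ((φ n).eval z) * (C c * φ e).eval z)
          = fun z => c * (conj ((φ n).eval z) * (φ e).eval z) := by
        funext z; simp [eval_mul]; ring
      rw [this, integral_const_mul, hφ.orth n e, if_neg (Nat.ne_of_gt hen), mul_zero]
    calc ∫ z, conj ((φ n).eval z) * Q.eval z ∂μ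
        = ∫ z, (conj ((φ n).eval z) * Q'.eval z
            + conj ((φ n).eval z) * (C c * φ e).eval z) ∂μ := by
          rw [hsplit]
          refine integral_congr_ae (Filter.Eventually.of_forall fun z => ?_)
          simp only [eval_add]; ring
      _ = 0 := by rw [integral_add hint1 hint2, hIQ', hIe, add_zero]

lemma orth_poly [IsFiniteMeasure μ] (hc : OnCircle μ) (hφ : IsOPUC μ φ) (n : ℕ)
    (Q : Polynomial ℂ) (hQ : Q.degree < n) :
    ∫ z, conj ((φ n).eval z) * Q.eval z ∂μ = 0 :=
  orth_lt hc hφ n Q.natDegree Q le_rfl hQ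

lemma orth_monicOP [IsFiniteMeasure μ] (hc : OnCircle μ) (hφ : IsOPUC μ φ) (n : ℕ)
    (Q : Polynomial ℂ) (hQ : Q.degree < n) :
    ∫ z, conj ((monicOP φ n).eval z) * Q.eval z ∂μ = 0 := by
  have : (fun z => conj ((monicOP φ n).eval z) * Q.eval z)
      = fun z => conj (((φ n).leadingCoeff)⁻¹) * (conj ((φ n).eval z) * Q.eval z) := by
    funext z; simp [monicOP, eval_mul, map_mul]; ring
  rw [this, integral_const_mul, orth_poly hc hφ n Q hQ, mul_zero]

lemma extremal [IsFiniteMeasure μ] (hc : OnCircle μ) (hφ : IsOPUC μ φ) (n : ℕ)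
    (P : Polynomial ℂ) (hPm : P.Monic) (hPd : P.degree = n) :
    pL2 μ (monicOP φ n) ≤ pL2 μ P := by
  set Φ := monicOP φ n with hΦ
  have hQd : (P - Φ).degree < n := by
    rw [← hPd]
    exact degree_sub_lt (hPd.trans (monicOP_degree hφ n).symm) hPm.ne_zero
      (hPm.leadingCoeff.trans (monicOP_monic hφ n).leadingCoeff.symm)
  have hsplit : P = Φ + (P - Φ) := by ring
  have hI : ∫ z, conj (Φ.eval z) * (P - Φ).eval z ∂μ = 0 := orth_monicOP hc hφ n _ hQd
  calc pL2 μ (monicOP φ n) = pL2 μ Φ := rfl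
    _ ≤ pL2 μ Φ + pL2 μ (P - Φ) := le_add_of_nonneg_right (pL2_nonneg μ _)
    _ = pL2 μ P := by
        conv_rhs => rw [hsplit]
        rw [pL2_add hc Φ (P - Φ), hI]
        simp

lemma deriv_extremal [IsFiniteMeasure μ] (hc : OnCircle μ) (hφ : IsOPUC μ φ) {n : ℕ}
    (hn : 1 ≤ n) (P : Polynomial ℂ) (hPm : P.Monic) (hPd : P.degree = n) :
    (n : ℝ) ^ 2 * pL2 μ (monicOP φ (n - 1)) ≤ pL2 μ (derivative P) := by
  have hnat : P.natDegree = n := natDegree_eq_of_degree_eq_some hPd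
  have hco : (derivative P).coeff (n - 1) = (n : ℂ) := by
    rw [coeff_derivative, Nat.sub_add_cancel hn, ← hnat, hPm.coeff_natDegree, one_mul, hnat,
      Nat.cast_sub hn]
    push_cast
    ring
  have hn0 : (n : ℂ) ≠ 0 := Nat.cast_ne_zero.mpr (by omega)
  have hD0 : derivative P ≠ 0 := fun h => hn0 (by rw [← hco, h, coeff_zero])
  have hndD : (derivative P).natDegree = n - 1 := by
    refine le_antisymm (by rw [← hnat] at *; exact natDegree_derivative_le P) ?_
    exact le_natDegree_of_ne_zero (by rw [hco]; exact hn0)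
  have hleadD : (derivative P).leadingCoeff = (n : ℂ) := by
    rw [leadingCoeff, hndD, hco]
  set Q := C ((n : ℂ)⁻¹) * derivative P with hQdef
  have hQm : Q.Monic := by
    rw [hQdef]
    unfold Polynomial.Monic
    rw [leadingCoeff_mul, leadingCoeff_C, hleadD, inv_mul_cancel₀ hn0]
  have hQd : Q.degree = ((n - 1 : ℕ) : WithBot ℕ) := by
    rw [hQdef]
    rw [degree_mul, degree_C (inv_ne_zero hn0), zero_add, degree_eq_natDegree hD0, hndD]
  have hDQ : derivative P = C (n : ℂ) * Q := by
    rw [hQdef]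
    rw [← mul_assoc, ← C_mul, mul_inv_cancel₀ hn0, C_1, one_mul]
  have hscale : pL2 μ (derivative P) = (n : ℝ) ^ 2 * pL2 μ Q := by
    conv_lhs => rw [hDQ]
    rw [pL2_C_mul]
    norm_num
  rw [hscale]
  exact mul_le_mul_of_nonneg_left (extremal hc hφ (n - 1) Q hQm hQd) (sq_nonneg _)

lemma pL2_phi [IsFiniteMeasure μ] (hc : OnCircle μ) (hφ : IsOPUC μ φ) (n : ℕ) :
    pL2 μ (φ n) = 1 := by
  have h := hφ.orth n n
  rw [if_pos rfl] at h
  have h2 : pL2 μ (φ n) = (∫ z, conj ((φ n).eval z) * (φ n).eval z ∂μ).re := by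
    have h3 := Complex.reCLM.integral_comp_comm
      (aux_integrable hc (aux_cont_mul (φ n) (φ n)))
    simp only [Complex.reCLM_apply] at h3
    rw [← h3]
    refine integral_congr_ae (Filter.Eventually.of_forall fun z => ?_)
    show ‖(φ n).eval z‖ ^ 2 = (conj ((φ n).eval z) * (φ n).eval z).re
    rw [Complex.conj_mul']
    simp [← Complex.ofReal_pow]
  rw [h2, h]
  simp

lemma pL2_monicOP [IsFiniteMeasure μ] (hc : OnCircle μ) (hφ : IsOPUC μ φ) (n : ℕ) :
    pL2 μ (monicOP φ n) = ‖((φ n).leadingCoeff)⁻¹‖ ^ 2 := by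
  rw [monicOP, pL2_C_mul, pL2_phi hc hφ n, mul_one]

lemma pL2_monicOP_deriv [IsFiniteMeasure μ] (hc : OnCircle μ) (hφ : IsOPUC μ φ) (n : ℕ) :
    pL2 μ (derivative (monicOP φ n)) = pL2 μ (monicOP φ n) * pL2 μ (derivative (φ n)) := by
  rw [monicOP, derivative_C_mul, pL2_C_mul, pL2_C_mul, pL2_phi hc hφ n, mul_one]

lemma sob_def (μ : Measure ℂ) (lam : ℝ) (n : ℕ) (P : Polynomial ℂ) :
    sobNormSq μ lam n P = pL2 μ P + lam / (n : ℝ) ^ 2 * pL2 μ (derivative P) := rfl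

lemma sob_nonneg (μ : Measure ℂ) {lam : ℝ} (hlam : 0 ≤ lam) (n : ℕ) (P : Polynomial ℂ) :
    0 ≤ sobNormSq μ lam n P := by
  rw [sob_def]
  have h1 := pL2_nonneg μ P
  have h2 := pL2_nonneg μ (derivative P)
  have h3 : 0 ≤ lam / (n : ℝ) ^ 2 := by positivity
  nlinarith

lemma sob_C_mul (μ : Measure ℂ) (lam : ℝ) (n : ℕ) (c : ℂ) (P : Polynomial ℂ) :
    sobNormSq μ lam n (C c * P) = ‖c‖ ^ 2 * sobNormSq μ lam n P := by
  rw [sob_def, sob_def, derivative_C_mul, pL2_C_mul, pL2_C_mul]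
  ring

lemma sob_parallelogram {μ : Measure ℂ} [IsFiniteMeasure μ] (hc : OnCircle μ)
    (lam : ℝ) (n : ℕ) (P Q : Polynomial ℂ) :
    sobNormSq μ lam n (P - Q)
      = 2 * sobNormSq μ lam n P + 2 * sobNormSq μ lam n Q - sobNormSq μ lam n (P + Q) := by
  simp only [sob_def, derivative_sub, derivative_add]
  rw [pL2_parallelogram hc P Q, pL2_parallelogram hc (derivative P) (derivative Q)]
  ring


/-- For a normal measure in the Szegő class:
`σ_n²/‖Φ_n‖² → 1 + λ` and `‖S_n − Φ_n‖²_{S,n} → 0`. -/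
theorem stmt1 (μ : Measure ℂ) [IsProbabilityMeasure μ] (hcirc : OnCircle μ)
    (hnt : NontrivialSupport μ) (φ : ℕ → Polynomial ℂ) (hφ : IsOPUC μ φ)
    (lam : ℝ) (hlam : 0 < lam)
    (hnormal : NormalBehavior μ φ)
    (hszego : ∃ L > (0 : ℝ), Tendsto (fun n : ℕ => l2norm μ (monicOP φ n)) atTop (𝓝 L))
    (S : ℕ → Polynomial ℂ) (σ : ℕ → ℝ)
    (hSmonic : ∀ n : ℕ, 1 ≤ n → (S n).Monic ∧ (S n).degree = n)
    (hSmin : ∀ n : ℕ, 1 ≤ n → ∀ P : Polynomial ℂ, P.Monic → P.degree = n →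
      sobNormSq μ lam n (S n) ≤ sobNormSq μ lam n P)
    (hσ : ∀ n : ℕ, 1 ≤ n → σ n = Real.sqrt (sobNormSq μ lam n (S n))) :
    Tendsto (fun n : ℕ => σ n ^ 2 / l2norm μ (monicOP φ n) ^ 2) atTop (𝓝 (1 + lam)) ∧
    Tendsto (fun n : ℕ => sobNormSq μ lam n (S n - monicOP φ n)) atTop (𝓝 0) := by
  obtain ⟨L, hL, hLtend⟩ := hszego
  set a : ℕ → ℝ := fun n => pL2 μ (monicOP φ n) with ha
  have hall2 : ∀ n, l2norm μ (monicOP φ n) ^ 2 = a n := fun n => l2norm_sq μ _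
  have haL : Tendsto a atTop (𝓝 (L ^ 2)) := by
    have := hLtend.pow 2
    simp only [hall2] at this
    exact this
  have hL2 : (0 : ℝ) < L ^ 2 := by positivity
  have haL' : Tendsto (fun n => a (n - 1)) atTop (𝓝 (L ^ 2)) :=
    haL.comp (tendsto_sub_atTop_nat 1)
  have hapos : ∀ᶠ n in atTop, 0 < a n := haL.eventually (eventually_gt_nhds hL2)
  -- the value σ n ^ 2
  have hσsq : ∀ n, 1 ≤ n → σ n ^ 2 = sobNormSq μ lam n (S n) := fun n hn => by
    rw [hσ n hn, Real.sq_sqrt (sob_nonneg μ hlam.le n (S n))]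
  -- the upper-bound function
  set D : ℕ → ℝ := fun n => l2norm μ (derivative (φ n)) with hD
  have hDsq : ∀ n, D n ^ 2 = pL2 μ (derivative (φ n)) := fun n => l2norm_sq μ _
  set ub : ℕ → ℝ := fun n => 1 + lam * (D n / n) ^ 2 with hub
  set lb : ℕ → ℝ := fun n => 1 + lam * (a (n - 1) / a n) with hlb
  have hub_tend : Tendsto ub atTop (𝓝 (1 + lam)) := by
    have h1 : Tendsto (fun n : ℕ => 1 + lam * (D n / n) ^ 2) atTop (𝓝 (1 + lam * 1 ^ 2)) :=
      tendsto_const_nhds.add ((hnormal.pow 2).const_mul lam)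
    simpa using h1
  have hlb_tend : Tendsto lb atTop (𝓝 (1 + lam)) := by
    have h1 : Tendsto (fun n : ℕ => a (n - 1) / a n) atTop (𝓝 (L ^ 2 / L ^ 2)) :=
      haL'.div haL (ne_of_gt hL2)
    rw [div_self (ne_of_gt hL2)] at h1
    have h2 : Tendsto (fun n : ℕ => 1 + lam * (a (n - 1) / a n)) atTop (𝓝 (1 + lam * 1)) :=
      tendsto_const_nhds.add (h1.const_mul lam)
    simpa using h2
  -- sobolev norm of the monic OP
  have hsobΦ : ∀ n : ℕ, 1 ≤ n → sobNormSq μ lam n (monicOP φ n) = a n * ub n := by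
    intro n hn
    have hn0 : (n : ℝ) ≠ 0 := Nat.cast_ne_zero.mpr (by omega)
    rw [sob_def, pL2_monicOP_deriv hcirc hφ n, hub]
    simp only [← ha, ← hDsq]
    field_simp
    ring
  -- bounds on sobNormSq (S n)
  have hupper : ∀ n : ℕ, 1 ≤ n → sobNormSq μ lam n (S n) ≤ a n * ub n := by
    intro n hn
    rw [← hsobΦ n hn]
    exact hSmin n hn _ (monicOP_monic hφ n) (monicOP_degree hφ n)
  have hlower : ∀ n : ℕ, 1 ≤ n → a n + lam * a (n - 1) ≤ sobNormSq μ lam n (S n) := by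
    intro n hn
    have hn0 : (n : ℝ) ≠ 0 := Nat.cast_ne_zero.mpr (by omega)
    obtain ⟨hm, hd⟩ := hSmonic n hn
    have h1 : a n ≤ pL2 μ (S n) := extremal hcirc hφ n (S n) hm hd
    have h2 : (n : ℝ) ^ 2 * a (n - 1) ≤ pL2 μ (derivative (S n)) :=
      deriv_extremal hcirc hφ hn (S n) hm hd
    rw [sob_def]
    have h3 : lam * a (n - 1) ≤ lam / (n : ℝ) ^ 2 * pL2 μ (derivative (S n)) := by
      rw [div_mul_eq_mul_div, le_div_iff₀ (by positivity)]
      nlinarith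
    linarith
  -- part (i)
  have hratio : Tendsto (fun n : ℕ => sobNormSq μ lam n (S n) / a n) atTop (𝓝 (1 + lam)) := by
    apply tendsto_of_tendsto_of_tendsto_of_le_of_le' hlb_tend hub_tend
    · filter_upwards [eventually_ge_atTop 1, hapos,
        (tendsto_sub_atTop_nat 1).eventually hapos] with n hn hpos hpos'
      rw [hlb, ← sub_nonneg]
      have := hlower n hn
      have hkey : sobNormSq μ lam n (S n) / a n - (1 + lam * (a (n - 1) / a n))
          = (sobNormSq μ lam n (S n) - (a n + lam * a (n - 1))) / a n := by
        field_simp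
      rw [hkey]
      exact div_nonneg (by linarith) hpos.le
    · filter_upwards [eventually_ge_atTop 1, hapos] with n hn hpos
      rw [← sub_nonneg]
      have := hupper n hn
      have hkey : ub n - sobNormSq μ lam n (S n) / a n
          = (a n * ub n - sobNormSq μ lam n (S n)) / a n := by
        field_simp
      rw [hkey]
      exact div_nonneg (by linarith) hpos.le
  have hpart1 : Tendsto (fun n : ℕ => σ n ^ 2 / l2norm μ (monicOP φ n) ^ 2) atTop
      (𝓝 (1 + lam)) := by
    apply hratio.congr'
    filter_upwards [eventually_ge_atTop 1] with n hn
    rw [hall2, hσsq n hn]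
  refine ⟨hpart1, ?_⟩
  -- part (ii)
  have hσ2tend : Tendsto (fun n : ℕ => sobNormSq μ lam n (S n)) atTop (𝓝 ((1 + lam) * L ^ 2)) := by
    have h1 := hratio.mul haL
    apply h1.congr'
    filter_upwards [hapos] with n hpos
    exact div_mul_cancel₀ _ (ne_of_gt hpos)
  have hΦtend : Tendsto (fun n : ℕ => sobNormSq μ lam n (monicOP φ n)) atTop
      (𝓝 ((1 + lam) * L ^ 2)) := by
    have h1 : Tendsto (fun n : ℕ => a n * ub n) atTop (𝓝 (L ^ 2 * (1 + lam))) :=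
      haL.mul hub_tend
    rw [mul_comm] at h1
    apply h1.congr'
    filter_upwards [eventually_ge_atTop 1] with n hn
    exact (hsobΦ n hn).symm
  -- midpoint argument
  have hbound : ∀ n : ℕ, 1 ≤ n →
      sobNormSq μ lam n (S n - monicOP φ n)
        ≤ 2 * sobNormSq μ lam n (monicOP φ n) - 2 * sobNormSq μ lam n (S n) := by
    intro n hn
    obtain ⟨hm, hd⟩ := hSmonic n hn
    set T := S n with hT
    set Φ := monicOP φ n with hΦdef
    have hΦm := monicOP_monic hφ n
    have hΦd := monicOP_degree hφ n
    have hnatT : T.natDegree = n := natDegree_eq_of_degree_eq_some hd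
    have hnatΦ : Φ.natDegree = n := natDegree_eq_of_degree_eq_some hΦd
    have hcoeff : (T + Φ).coeff n = 2 := by
      rw [coeff_add, ← hnatT, hm.coeff_natDegree, hnatT, ← hnatΦ, hΦm.coeff_natDegree]
      norm_num
    have hdegsum : (T + Φ).degree = n := by
      refine le_antisymm ?_ ?_
      · exact (degree_add_le T Φ).trans (by rw [hd, hΦd, max_self])
      · exact le_degree_of_ne_zero (by rw [hcoeff]; norm_num)
    have hleadsum : (T + Φ).leadingCoeff = 2 := by
      rw [leadingCoeff, natDegree_eq_of_degree_eq_some hdegsum, hcoeff]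
    set M := C ((2 : ℂ)⁻¹) * (T + Φ) with hM
    have hMm : M.Monic := by
      unfold Polynomial.Monic
      rw [hM, leadingCoeff_mul, leadingCoeff_C, hleadsum]
      norm_num
    have hMd : M.degree = n := by
      rw [hM, degree_mul, degree_C (by norm_num), hdegsum, zero_add]
    have hMsob : sobNormSq μ lam n (T + Φ) = 4 * sobNormSq μ lam n M := by
      rw [hM, sob_C_mul]
      have h24 : ‖(2 : ℂ)⁻¹‖ ^ 2 = (1 / 4 : ℝ) := by norm_num
      rw [h24]
      ring
    have hMmin : sobNormSq μ lam n (S n) ≤ sobNormSq μ lam n M := hSmin n hn M hMm hMd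
    have hpar := sob_parallelogram hcirc lam n T Φ
    rw [hpar, hMsob]
    linarith
  -- squeeze to 0
  have hzero : Tendsto (fun n : ℕ =>
      2 * sobNormSq μ lam n (monicOP φ n) - 2 * sobNormSq μ lam n (S n)) atTop (𝓝 0) := by
    have h1 := (hΦtend.const_mul 2).sub (hσ2tend.const_mul 2)
    simpa using h1
  apply tendsto_of_tendsto_of_tendsto_of_le_of_le' tendsto_const_nhds hzero
  · exact Filter.Eventually.of_forall fun n => sob_nonneg μ hlam.le n _
  · filter_upwards [eventually_ge_atTop 1] with n hn
    exact hbound n hn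
end
end

section
/- Let 0 < N_1 < N_2 < ⋯ be natural numbers with limsup_{k→∞} N_k / N_{k+1} < 1, and let β_k ∈ 𝔻 with β_k → 0 as k → ∞. Let μ be a nontrivial probability measure on the unit circle whose Verblunsky coefficients form the associated sparse sequence, i.e., α_j = β_k if j = N_k − 1 for some k ≥ 1 and α_j = 0 otherwise. Then μ has normal L²-derivative behavior. -/
open MeasureTheory Polynomial Filter Topology ComplexConjugate

noncomputable section

section Infra

open scoped ComplexConjugate

variable {μ : MeasureTheory.Measure ℂ} [MeasureTheory.IsProbabilityMeasure μ]

open MeasureTheory Polynomial ComplexConjugate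

local notation "⟪" x ", " y "⟫" => @inner ℂ _ _ x y

lemma st10_ae_circle (hcirc : OnCircle μ) : ∀ᵐ z ∂μ, ‖z‖ = 1 := by
  have hset : (Metric.sphere (0:ℂ) 1)ᶜ = {z : ℂ | ¬ ‖z‖ = 1} := by
    ext z; simp [Real.dist_eq, Complex.dist_eq]
  have h : ∀ᵐ z ∂μ, z ∈ Metric.sphere (0:ℂ) 1 := by
    rw [ae_iff]; rw [← hset] at *; exact hcirc
  filter_upwards [h] with z hz
  simpa [Complex.dist_eq] using hz

lemma st10_memLp (hcirc : OnCircle μ) (P : Polynomial ℂ) :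
    MemLp (fun z => P.eval z) 2 μ := by
  obtain ⟨C, hC⟩ := (isCompact_sphere (0:ℂ) 1).exists_bound_of_continuousOn
    (P.continuous.continuousOn)
  refine MemLp.of_bound P.continuous.aestronglyMeasurable C ?_
  filter_upwards [st10_ae_circle hcirc] with z hz
  exact hC z (by simpa [Complex.dist_eq] using hz)

lemma st10_integrable (hcirc : OnCircle μ) (P Q : Polynomial ℂ) :
    Integrable (fun z => conj (P.eval z) * Q.eval z) μ := by
  have hcont : Continuous fun z : ℂ => conj (P.eval z) * Q.eval z :=
    (Complex.continuous_conj.comp P.continuous).mul Q.continuous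
  obtain ⟨C, hC⟩ := (isCompact_sphere (0:ℂ) 1).exists_bound_of_continuousOn
    hcont.continuousOn
  refine ⟨hcont.aestronglyMeasurable, HasFiniteIntegral.of_bounded (C := C) ?_⟩
  filter_upwards [st10_ae_circle hcirc] with z hz
  exact hC z (by simpa [Complex.dist_eq] using hz)

/-- The canonical linear map from polynomials into `L²(μ)`. -/
def st10T (hcirc : OnCircle μ) : Polynomial ℂ →ₗ[ℂ] Lp ℂ 2 μ where
  toFun P := (st10_memLp hcirc P).toLp _
  map_add' P Q := by
    apply MeasureTheory.Lp.ext
    filter_upwards [MemLp.coeFn_toLp (st10_memLp hcirc (P+Q)),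
      MemLp.coeFn_toLp (st10_memLp hcirc P), MemLp.coeFn_toLp (st10_memLp hcirc Q),
      MeasureTheory.Lp.coeFn_add ((st10_memLp hcirc P).toLp _) ((st10_memLp hcirc Q).toLp _)]
      with z h0 h1 h2 h3
    rw [h0, h3, Pi.add_apply, h1, h2]; simp
  map_smul' c P := by
    apply MeasureTheory.Lp.ext
    filter_upwards [MemLp.coeFn_toLp (st10_memLp hcirc (c • P)),
      MemLp.coeFn_toLp (st10_memLp hcirc P),
      MeasureTheory.Lp.coeFn_smul c ((st10_memLp hcirc P).toLp _)]
      with z h0 h1 h3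
    rw [RingHom.id_apply, h0, h3, Pi.smul_apply, h1]
    simp [Polynomial.smul_eq_C_mul]

lemma st10T_coe (hcirc : OnCircle μ) (P : Polynomial ℂ) :
    st10T hcirc P =ᵐ[μ] fun z => P.eval z := MemLp.coeFn_toLp (st10_memLp hcirc P)

lemma st10T_inner (hcirc : OnCircle μ) (P Q : Polynomial ℂ) :
    ⟪st10T hcirc P, st10T hcirc Q⟫ = ∫ z, conj (P.eval z) * Q.eval z ∂μ := by
  rw [MeasureTheory.L2.inner_def]
  refine integral_congr_ae ?_
  filter_upwards [st10T_coe hcirc P, st10T_coe hcirc Q] with z h1 h2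
  rw [h1, h2]
  exact RCLike.inner_apply' _ _

lemma st10T_norm_sq (hcirc : OnCircle μ) (P : Polynomial ℂ) :
    ‖st10T hcirc P‖ ^ 2 = ∫ z, ‖P.eval z‖ ^ 2 ∂μ := by
  have h1 : (⟪st10T hcirc P, st10T hcirc P⟫ : ℂ) = ((∫ z, ‖P.eval z‖ ^ 2 ∂μ : ℝ) : ℂ) := by
    rw [st10T_inner hcirc P P]
    rw [show (fun z => conj (P.eval z) * P.eval z) = fun z => ((‖P.eval z‖^2 : ℝ) : ℂ) by
      funext z; rw [RCLike.conj_mul]; norm_cast]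
    exact integral_ofReal
  have h2 := @inner_self_eq_norm_sq ℂ _ _ _ _ (st10T hcirc P)
  rw [h1] at h2
  exact_mod_cast h2.symm

lemma st10T_norm (hcirc : OnCircle μ) (P : Polynomial ℂ) :
    ‖st10T hcirc P‖ = l2norm μ P := by
  rw [l2norm, ← Real.sqrt_eq_rpow, ← st10T_norm_sq hcirc, Real.sqrt_sq (norm_nonneg _)]

lemma st10T_norm_congr (hcirc : OnCircle μ) {P Q : Polynomial ℂ}
    (h : ∀ z : ℂ, ‖z‖ = 1 → ‖P.eval z‖ = ‖Q.eval z‖) :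
    ‖st10T hcirc P‖ = ‖st10T hcirc Q‖ := by
  have hsq : ‖st10T hcirc P‖ ^ 2 = ‖st10T hcirc Q‖ ^ 2 := by
    rw [st10T_norm_sq, st10T_norm_sq]
    refine integral_congr_ae ?_
    filter_upwards [st10_ae_circle hcirc] with z hz
    rw [h z hz]
  rw [← Real.sqrt_sq (norm_nonneg (st10T hcirc P)), ← Real.sqrt_sq (norm_nonneg (st10T hcirc Q)), hsq]

end Infra

section Alg

open Polynomial ComplexConjugate

lemma starPoly_coeff (n : ℕ) (P : Polynomial ℂ) (i : ℕ) :
    (starPoly n P).coeff i = conj (P.coeff (Polynomial.revAt n i)) := by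
  simp [starPoly, Polynomial.coeff_reflect, Polynomial.coeff_map]

lemma starPoly_natDegree_le (n : ℕ) (P : Polynomial ℂ) (hP : P.natDegree ≤ n) :
    (starPoly n P).natDegree ≤ n := by
  rw [Polynomial.natDegree_le_iff_coeff_eq_zero]
  intro m hm
  rw [starPoly_coeff, Polynomial.revAt_eq_self_of_lt hm,
    Polynomial.coeff_eq_zero_of_natDegree_lt (lt_of_le_of_lt hP hm), map_zero]

lemma starPoly_coeff_zero (n : ℕ) (P : Polynomial ℂ) :
    (starPoly n P).coeff 0 = conj (P.coeff n) := by
  rw [starPoly_coeff, Polynomial.revAt_le (Nat.zero_le n), Nat.sub_zero]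

lemma starPoly_C_mul (n : ℕ) (c : ℂ) (P : Polynomial ℂ) :
    starPoly n (Polynomial.C c * P) = Polynomial.C (conj c) * starPoly n P := by
  unfold starPoly
  rw [Polynomial.map_mul, Polynomial.map_C, Polynomial.reflect_C_mul]

lemma starPoly_sub (n : ℕ) (P Q : Polynomial ℂ) :
    starPoly n (P - Q) = starPoly n P - starPoly n Q := by
  ext i
  simp [starPoly_coeff, Polynomial.coeff_sub, map_sub]

lemma starPoly_X_mul (n : ℕ) (P : Polynomial ℂ) (hP : P.natDegree ≤ n) :
    starPoly (n + 1) (Polynomial.X * P) = starPoly n P := by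
  ext i
  rw [starPoly_coeff, starPoly_coeff]
  rcases le_or_gt i n with hi | hi
  · rw [Polynomial.revAt_le (hi.trans (Nat.le_succ n)), Polynomial.revAt_le hi]
    have : n + 1 - i = (n - i) + 1 := by omega
    rw [this, Polynomial.coeff_X_mul]
  · rcases eq_or_lt_of_le (Nat.succ_le_of_lt hi) with hi1 | hi1
    · have e1 : Polynomial.revAt (n+1) i = 0 := by
        rw [← hi1, Polynomial.revAt_le (le_refl (n+1)), Nat.sub_self]
      rw [e1, Polynomial.revAt_eq_self_of_lt hi]
      simp [Polynomial.coeff_eq_zero_of_natDegree_lt (lt_of_le_of_lt hP hi)]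
    · rw [Polynomial.revAt_eq_self_of_lt hi1, Polynomial.revAt_eq_self_of_lt hi]
      have h1 : P.coeff i = 0 := Polynomial.coeff_eq_zero_of_natDegree_lt (lt_of_le_of_lt hP hi)
      have h2 : (Polynomial.X * P).coeff i = 0 := by
        have : i = (i - 1) + 1 := by omega
        rw [this, Polynomial.coeff_X_mul]
        exact Polynomial.coeff_eq_zero_of_natDegree_lt (by omega)
      rw [h1, h2, map_zero]

lemma starPoly_starPoly (n : ℕ) (P : Polynomial ℂ) (hP : P.natDegree ≤ n) :
    starPoly (n + 1) (starPoly n P) = Polynomial.X * P := by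
  ext i
  rw [starPoly_coeff, starPoly_coeff, Complex.conj_conj]
  rcases Nat.eq_zero_or_pos i with rfl | hi0
  · rw [Polynomial.revAt_le (Nat.zero_le (n+1)), Nat.sub_zero,
      Polynomial.revAt_eq_self_of_lt (Nat.lt_succ_self n)]
    simp [Polynomial.coeff_eq_zero_of_natDegree_lt (Nat.lt_succ_of_le hP)]
  · rcases le_or_gt i (n+1) with hi | hi
    · rw [Polynomial.revAt_le hi, Polynomial.revAt_le (by omega : n + 1 - i ≤ n)]
      have h1 : n - (n + 1 - i) = i - 1 := by omega
      have h2 : i = (i - 1) + 1 := by omega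
      have h3 : (Polynomial.X * P).coeff i = P.coeff (i - 1) := by
        conv_lhs => rw [h2]
        rw [Polynomial.coeff_X_mul]
      rw [h1, h3]
    · rw [Polynomial.revAt_eq_self_of_lt hi, Polynomial.revAt_eq_self_of_lt (by omega : n < i)]
      have h1 : P.coeff i = 0 := Polynomial.coeff_eq_zero_of_natDegree_lt (by omega)
      have h2 : (Polynomial.X * P).coeff i = 0 := by
        have : i = (i - 1) + 1 := by omega
        rw [this, Polynomial.coeff_X_mul]
        exact Polynomial.coeff_eq_zero_of_natDegree_lt (by omega)
      rw [h1, h2]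

lemma starPoly_eval (n : ℕ) (P : Polynomial ℂ) (hP : P.natDegree ≤ n) {z : ℂ}
    (hz : ‖z‖ = 1) :
    (starPoly n P).eval z = z ^ n * conj (P.eval z) := by
  have hzc : z * conj z = 1 := by
    rw [Complex.mul_conj]
    norm_cast
    rw [Complex.normSq_eq_norm_sq, hz, one_pow]
  rw [Polynomial.eval_eq_sum_range' (lt_of_le_of_lt (starPoly_natDegree_le n P hP)
      (Nat.lt_succ_self n)) z,
    Polynomial.eval_eq_sum_range' (lt_of_le_of_lt hP (Nat.lt_succ_self n)) z,
    map_sum, Finset.mul_sum]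
  conv_lhs => rw [← Finset.sum_range_reflect]
  refine Finset.sum_congr rfl ?_
  intro i hi
  rw [Finset.mem_range] at hi
  have hin : i ≤ n := by omega
  have h1 : n + 1 - 1 - i = n - i := by omega
  have h4 : n - (n - i) = i := by omega
  rw [h1, starPoly_coeff, Polynomial.revAt_le (Nat.sub_le n i), h4, map_mul, map_pow]
  have h2 : z ^ n * (conj (P.coeff i) * (conj z) ^ i)
      = conj (P.coeff i) * (z ^ (n - i) * (z * conj z) ^ i) := by
    rw [mul_pow]
    have : z ^ n = z ^ (n - i) * z ^ i := by rw [← pow_add]; congr 1; omega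
    rw [this]; ring
  rw [h2, hzc, one_pow, mul_one]

lemma starPoly_norm_eval (n : ℕ) (P : Polynomial ℂ) (hP : P.natDegree ≤ n) {z : ℂ}
    (hz : ‖z‖ = 1) : ‖(starPoly n P).eval z‖ = ‖P.eval z‖ := by
  rw [starPoly_eval n P hP hz, norm_mul, norm_pow, hz, one_pow, one_mul,
    RCLike.norm_conj]

end Alg

section OPUC

set_option linter.unusedSectionVars false

open MeasureTheory Polynomial ComplexConjugate

local notation "⟪" x ", " y "⟫" => @inner ℂ _ _ x y

variable {μ : MeasureTheory.Measure ℂ} [MeasureTheory.IsProbabilityMeasure μ]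
variable (hcirc : OnCircle μ) (φ : ℕ → Polynomial ℂ) (hφ : IsOPUC μ φ)

include hφ

lemma st10_natDegree (n : ℕ) : (φ n).natDegree = n :=
  Polynomial.natDegree_eq_of_degree_eq_some (hφ.deg n)

lemma st10_lead_ne (n : ℕ) : (φ n).leadingCoeff ≠ 0 := by
  intro h
  have := hφ.lead_re_pos n
  rw [h] at this
  simp at this

lemma st10_lead_conj (n : ℕ) : conj ((φ n).leadingCoeff) = (φ n).leadingCoeff :=
  Complex.conj_eq_iff_im.2 (hφ.lead_im_zero n)

lemma st10_coeff_eq_lead (n : ℕ) : (φ n).coeff n = (φ n).leadingCoeff := by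
  rw [Polynomial.leadingCoeff, st10_natDegree φ hφ]

lemma st10_inner_phi_phi (m n : ℕ) :
    ⟪st10T hcirc (φ m), st10T hcirc (φ n)⟫ = if m = n then 1 else 0 := by
  rw [st10T_inner]; exact hφ.orth m n

lemma st10_norm_phi (n : ℕ) : ‖st10T hcirc (φ n)‖ = 1 := by
  have h2 := @inner_self_eq_norm_sq ℂ _ _ _ _ (st10T hcirc (φ n))
  rw [st10_inner_phi_phi hcirc φ hφ n n, if_pos rfl] at h2
  have : ‖st10T hcirc (φ n)‖ ^ 2 = 1 := by exact_mod_cast h2.symm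
  nlinarith [norm_nonneg (st10T hcirc (φ n))]

omit hφ in
lemma st10T_C_mul (c : ℂ) (P : Polynomial ℂ) :
    st10T hcirc (Polynomial.C c * P) = c • st10T hcirc P := by
  rw [← Polynomial.smul_eq_C_mul, _root_.map_smul]

lemma st10_span (n : ℕ) : ∀ P : Polynomial ℂ, P.natDegree ≤ n →
    ∃ c : ℕ → ℂ, P = ∑ j ∈ Finset.range (n+1), Polynomial.C (c j) * φ j := by
  induction n with
  | zero =>
    intro P hP
    have h0 : φ 0 = Polynomial.C ((φ 0).coeff 0) :=
      Polynomial.eq_C_of_natDegree_le_zero (le_of_eq (st10_natDegree φ hφ 0))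
    have hne : (φ 0).coeff 0 ≠ 0 := by
      rw [st10_coeff_eq_lead φ hφ 0]; exact st10_lead_ne φ hφ 0
    refine ⟨fun _ => P.coeff 0 / (φ 0).coeff 0, ?_⟩
    have hkey : Polynomial.C (P.coeff 0 / (φ 0).coeff 0) * φ 0
        = Polynomial.C (P.coeff 0) := by
      rw [h0]
      simp only [Polynomial.coeff_C_zero]
      rw [← Polynomial.C_mul, div_mul_cancel₀ _ hne]
    rw [Finset.sum_range_one]
    show P = Polynomial.C (P.coeff 0 / (φ 0).coeff 0) * φ 0
    rw [hkey]
    exact Polynomial.eq_C_of_natDegree_le_zero hP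
  | succ n ih =>
    intro P hP
    set d := P.coeff (n+1) / (φ (n+1)).leadingCoeff with hd
    set Q := P - Polynomial.C d * φ (n+1) with hQdef
    have hQdeg : Q.natDegree ≤ n := by
      rw [Polynomial.natDegree_le_iff_coeff_eq_zero]
      intro m hm
      rcases eq_or_lt_of_le (Nat.succ_le_of_lt hm) with hm1 | hm1
      · rw [hQdef, Polynomial.coeff_sub, Polynomial.coeff_C_mul, ← hm1]
        rw [st10_coeff_eq_lead φ hφ (n+1), hd,
          div_mul_cancel₀ _ (st10_lead_ne φ hφ (n+1)), sub_self]
      · rw [hQdef, Polynomial.coeff_sub, Polynomial.coeff_C_mul,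
          Polynomial.coeff_eq_zero_of_natDegree_lt (lt_of_le_of_lt hP hm1),
          Polynomial.coeff_eq_zero_of_natDegree_lt (by rw [st10_natDegree φ hφ]; omega),
          mul_zero, sub_self]
    obtain ⟨c, hc⟩ := ih Q hQdeg
    refine ⟨fun j => if j = n+1 then d else c j, ?_⟩
    rw [Finset.sum_range_succ]
    beta_reduce
    rw [if_pos rfl]
    have hsum : (∑ j ∈ Finset.range (n+1), Polynomial.C (if j = n+1 then d else c j) * φ j)
        = ∑ j ∈ Finset.range (n+1), Polynomial.C (c j) * φ j := by
      refine Finset.sum_congr rfl ?_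
      intro j hj
      rw [Finset.mem_range] at hj
      rw [if_neg (by omega)]
    rw [hsum, ← hc, hQdef]
    ring

lemma st10_inner_phi_low (n m : ℕ) (P : Polynomial ℂ) (hP : P.natDegree ≤ n) (hnm : n < m) :
    ⟪st10T hcirc (φ m), st10T hcirc P⟫ = 0 := by
  obtain ⟨c, hc⟩ := st10_span φ hφ n P hP
  rw [hc, map_sum, inner_sum]
  refine Finset.sum_eq_zero ?_
  intro j hj
  rw [Finset.mem_range] at hj
  rw [st10T_C_mul, inner_smul_right, st10_inner_phi_phi hcirc φ hφ,
    if_neg (by omega), mul_zero]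

lemma st10_inner_low_phi (n m : ℕ) (P : Polynomial ℂ) (hP : P.natDegree ≤ n) (hnm : n < m) :
    ⟪st10T hcirc P, st10T hcirc (φ m)⟫ = 0 := by
  obtain ⟨c, hc⟩ := st10_span φ hφ n P hP
  rw [hc, map_sum, sum_inner]
  refine Finset.sum_eq_zero ?_
  intro j hj
  rw [Finset.mem_range] at hj
  rw [st10T_C_mul, inner_smul_left, st10_inner_phi_phi hcirc φ hφ,
    if_neg (by omega), mul_zero]

lemma st10_inner_top (n : ℕ) (P : Polynomial ℂ) (hP : P.natDegree ≤ n) :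
    ⟪st10T hcirc (φ n), st10T hcirc P⟫ = P.coeff n / (φ n).leadingCoeff := by
  obtain ⟨c, hc⟩ := st10_span φ hφ n P hP
  have h1 : ⟪st10T hcirc (φ n), st10T hcirc P⟫ = c n := by
    rw [hc, map_sum, inner_sum]
    rw [Finset.sum_eq_single n]
    · rw [st10T_C_mul, inner_smul_right, st10_inner_phi_phi hcirc φ hφ, if_pos rfl, mul_one]
    · intro j hj hjn
      rw [st10T_C_mul, inner_smul_right, st10_inner_phi_phi hcirc φ hφ,
        if_neg (fun h => hjn h.symm), mul_zero]
    · intro h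
      exact absurd (Finset.self_mem_range_succ n) h
  have h2 : P.coeff n = c n * (φ n).leadingCoeff := by
    rw [hc, Polynomial.finset_sum_coeff]
    rw [Finset.sum_eq_single n]
    · rw [Polynomial.coeff_C_mul, st10_coeff_eq_lead φ hφ]
    · intro j hj hjn
      rw [Finset.mem_range] at hj
      rw [Polynomial.coeff_C_mul,
        Polynomial.coeff_eq_zero_of_natDegree_lt (by rw [st10_natDegree φ hφ]; omega), mul_zero]
    · intro h
      exact absurd (Finset.self_mem_range_succ n) h
  rw [h1, h2, mul_div_cancel_right₀ _ (st10_lead_ne φ hφ n)]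

omit hφ in
lemma st10_inner_X_mul (P Q : Polynomial ℂ) :
    ⟪st10T hcirc (Polynomial.X * P), st10T hcirc (Polynomial.X * Q)⟫
      = ⟪st10T hcirc P, st10T hcirc Q⟫ := by
  rw [st10T_inner, st10T_inner]
  refine integral_congr_ae ?_
  filter_upwards [st10_ae_circle hcirc] with z hz
  have hzc : conj z * z = 1 := by
    rw [RCLike.conj_mul, hz]
    norm_num
  simp only [Polynomial.eval_mul, Polynomial.eval_X, map_mul]
  calc conj z * conj (P.eval z) * (z * Q.eval z)
      = (conj z * z) * (conj (P.eval z) * Q.eval z) := by ring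
    _ = conj (P.eval z) * Q.eval z := by rw [hzc, one_mul]

omit hφ in
lemma st10_norm_X_mul (P : Polynomial ℂ) :
    ‖st10T hcirc (Polynomial.X * P)‖ = ‖st10T hcirc P‖ := by
  refine st10T_norm_congr hcirc ?_
  intro z hz
  rw [Polynomial.eval_mul, Polynomial.eval_X, norm_mul, hz, one_mul]

end OPUC

section Szego

set_option linter.unusedSectionVars false

open MeasureTheory Polynomial ComplexConjugate

local notation "⟪" x ", " y "⟫" => @inner ℂ _ _ x y

variable {μ : MeasureTheory.Measure ℂ} [MeasureTheory.IsProbabilityMeasure μ]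
variable (hcirc : OnCircle μ) (φ : ℕ → Polynomial ℂ) (hφ : IsOPUC μ φ)

include hcirc hφ

lemma st10_inner_Xpow_star (n j : ℕ) (hj1 : 1 ≤ j) (hjn : j ≤ n) :
    ⟪st10T hcirc (Polynomial.X ^ j), st10T hcirc (starPoly n (φ n))⟫ = 0 := by
  have h2 := st10_inner_low_phi hcirc φ hφ (n-1) n ((Polynomial.X : Polynomial ℂ) ^ (n - j))
    (by rw [Polynomial.natDegree_X_pow]; omega) (by omega)
  rw [st10T_inner]
  have h1 : ∫ z, conj (((Polynomial.X : Polynomial ℂ) ^ j).eval z)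
        * (starPoly n (φ n)).eval z ∂μ
      = ∫ z, conj (conj (((Polynomial.X : Polynomial ℂ) ^ (n - j)).eval z) * (φ n).eval z) ∂μ := by
    refine integral_congr_ae ?_
    filter_upwards [st10_ae_circle hcirc] with z hz
    have hzc : z * conj z = 1 := by
      rw [Complex.mul_conj]; norm_cast; rw [Complex.normSq_eq_norm_sq, hz, one_pow]
    rw [starPoly_eval n (φ n) (le_of_eq (st10_natDegree φ hφ n)) hz]
    simp only [Polynomial.eval_pow, Polynomial.eval_X, map_mul, map_pow, Complex.conj_conj]
    have hkey : (conj z) ^ j * z ^ n = z ^ (n - j) := by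
      have hsplit : z ^ n = z ^ j * z ^ (n - j) := by
        rw [← pow_add]; congr 1; omega
      calc (conj z) ^ j * z ^ n = (z * conj z) ^ j * z ^ (n - j) := by
            rw [hsplit, mul_pow]; ring
        _ = z ^ (n - j) := by rw [hzc, one_pow, one_mul]
    calc (conj z) ^ j * (z ^ n * conj ((φ n).eval z))
        = ((conj z) ^ j * z ^ n) * conj ((φ n).eval z) := by ring
      _ = z ^ (n - j) * conj ((φ n).eval z) := by rw [hkey]
  rw [h1, integral_conj, ← st10T_inner hcirc, h2, map_zero]

lemma st10_coeff_val (n : ℕ) (c : ℕ → ℂ) (P : Polynomial ℂ)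
    (hc : P = ∑ j ∈ Finset.range (n+1), Polynomial.C (c j) * φ j) (i : ℕ) (hi : i ≤ n) :
    ⟪st10T hcirc (φ i), st10T hcirc P⟫ = c i := by
  rw [hc, map_sum, inner_sum]
  rw [Finset.sum_eq_single i]
  · rw [st10T_C_mul, inner_smul_right, st10_inner_phi_phi hcirc φ hφ, if_pos rfl, mul_one]
  · intro j hj hji
    rw [st10T_C_mul, inner_smul_right, st10_inner_phi_phi hcirc φ hφ,
      if_neg (fun h => hji h.symm), mul_zero]
  · intro h
    exact absurd (Finset.mem_range.2 (by omega)) h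

lemma st10_unique_perp (n : ℕ) (Q : Polynomial ℂ) (hdeg : Q.natDegree ≤ n)
    (hperp : ∀ j, 1 ≤ j → j ≤ n → ⟪st10T hcirc (Polynomial.X ^ j), st10T hcirc Q⟫ = 0) :
    Q = Polynomial.C (Q.coeff 0 / conj ((φ n).leadingCoeff)) * starPoly n (φ n) := by
  set a := Q.coeff 0 / conj ((φ n).leadingCoeff) with ha
  set D := Q - Polynomial.C a * starPoly n (φ n) with hD
  have hconjne : conj ((φ n).leadingCoeff) ≠ 0 := by
    simpa using st10_lead_ne φ hφ n
  have hphideg : (φ n).natDegree ≤ n := le_of_eq (st10_natDegree φ hφ n)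
  have hD0 : D.coeff 0 = 0 := by
    rw [hD, Polynomial.coeff_sub, Polynomial.coeff_C_mul, starPoly_coeff_zero,
      st10_coeff_eq_lead φ hφ n, ha, div_mul_cancel₀ _ hconjne, sub_self]
  obtain ⟨R, hR⟩ := Polynomial.X_dvd_iff.mpr hD0
  have hDdeg : D.natDegree ≤ n := by
    refine le_trans (Polynomial.natDegree_sub_le _ _) ?_
    rw [max_le_iff]
    exact ⟨hdeg, le_trans (Polynomial.natDegree_C_mul_le _ _) (starPoly_natDegree_le n _ hphideg)⟩
  suffices hzero : D = 0 by
    exact sub_eq_zero.mp (by rw [← hD]; exact hzero)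
  rcases eq_or_ne R 0 with rfl | hRne
  · rw [hR, mul_zero]
  have hperpD : ∀ j, 1 ≤ j → j ≤ n →
      ⟪st10T hcirc ((Polynomial.X : Polynomial ℂ) ^ j), st10T hcirc D⟫ = 0 := by
    intro j h1 h2
    rw [hD, map_sub, inner_sub_right, hperp j h1 h2, st10T_C_mul, inner_smul_right,
      st10_inner_Xpow_star hcirc φ hφ n j h1 h2, mul_zero, sub_zero]
  have hXR : (Polynomial.X * R).natDegree = 1 + R.natDegree := by
    rw [Polynomial.natDegree_mul Polynomial.X_ne_zero hRne, Polynomial.natDegree_X]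
  have hXRn : (Polynomial.X * R).natDegree ≤ n := hR ▸ hDdeg
  have hRdeg : R.natDegree ≤ n - 1 := by omega
  have hn1 : 1 ≤ n := by omega
  obtain ⟨c, hc⟩ := st10_span φ hφ (n-1) R hRdeg
  have hperpR : ∀ i, i ≤ n - 1 →
      ⟪st10T hcirc ((Polynomial.X : Polynomial ℂ) ^ i), st10T hcirc R⟫ = 0 := by
    intro i hi
    have h := hperpD (i+1) (by omega) (by omega)
    rw [hR] at h
    have hXp : (Polynomial.X : Polynomial ℂ) ^ (i+1) = Polynomial.X * Polynomial.X ^ i :=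
      pow_succ' _ _
    rwa [hXp, st10_inner_X_mul] at h
  have hphiR : ∀ i, i ≤ n - 1 → ⟪st10T hcirc (φ i), st10T hcirc R⟫ = 0 := by
    intro i hi
    have hexp : φ i = ∑ j ∈ Finset.range (i+1),
        Polynomial.C ((φ i).coeff j) * Polynomial.X ^ j := by
      conv_lhs => rw [Polynomial.as_sum_range' (φ i) (i+1)
        (by rw [st10_natDegree φ hφ]; omega)]
      exact Finset.sum_congr rfl fun j _ => (Polynomial.C_mul_X_pow_eq_monomial).symm
    rw [hexp, map_sum, sum_inner]
    refine Finset.sum_eq_zero fun j hj => ?_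
    rw [Finset.mem_range] at hj
    rw [st10T_C_mul, inner_smul_left, hperpR j (by omega), mul_zero]
  have hczero : R = 0 := by
    rw [hc]
    refine Finset.sum_eq_zero fun j hj => ?_
    rw [Finset.mem_range] at hj
    have := st10_coeff_val hcirc φ hφ (n-1) c R hc j (by omega)
    rw [hphiR j (by omega)] at this
    rw [← this, map_zero, zero_mul]
  exact absurd hczero hRne

lemma st10_szego (n : ℕ) :
    Polynomial.C ((φ n).leadingCoeff / (φ (n+1)).leadingCoeff) * φ (n+1)
      = Polynomial.X * φ n - Polynomial.C (conj (verblunsky φ n)) * starPoly n (φ n) := by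
  set r := (φ n).leadingCoeff / (φ (n+1)).leadingCoeff with hr
  set Q := Polynomial.C r * φ (n+1) - Polynomial.X * φ n with hQ
  have hlne := st10_lead_ne φ hφ n
  have hlne1 := st10_lead_ne φ hφ (n+1)
  have hQdeg : Q.natDegree ≤ n := by
    rw [Polynomial.natDegree_le_iff_coeff_eq_zero]
    intro m hm
    have hXc : (Polynomial.X * φ n).coeff m = (φ n).coeff (m - 1) := by
      have : m = (m - 1) + 1 := by omega
      conv_lhs => rw [this]
      rw [Polynomial.coeff_X_mul]
    rw [hQ, Polynomial.coeff_sub, Polynomial.coeff_C_mul, hXc]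
    rcases eq_or_lt_of_le (Nat.succ_le_of_lt hm) with hm1 | hm1
    · have e1 : (φ (n+1)).coeff m = (φ (n+1)).leadingCoeff := by
        rw [← hm1, st10_coeff_eq_lead φ hφ (n+1)]
      have e2 : (φ n).coeff (m - 1) = (φ n).leadingCoeff := by
        have : m - 1 = n := by omega
        rw [this, st10_coeff_eq_lead φ hφ n]
      rw [e1, e2, hr, div_mul_cancel₀ _ hlne1, sub_self]
    · rw [Polynomial.coeff_eq_zero_of_natDegree_lt (by rw [st10_natDegree φ hφ]; omega),
        Polynomial.coeff_eq_zero_of_natDegree_lt (by rw [st10_natDegree φ hφ]; omega),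
        mul_zero, sub_self]
  have hQperp : ∀ j, 1 ≤ j → j ≤ n →
      ⟪st10T hcirc ((Polynomial.X : Polynomial ℂ) ^ j), st10T hcirc Q⟫ = 0 := by
    intro j h1 h2
    have e1 : ⟪st10T hcirc ((Polynomial.X : Polynomial ℂ) ^ j), st10T hcirc (φ (n+1))⟫ = 0 :=
      st10_inner_low_phi hcirc φ hφ n (n+1) _ (by rw [Polynomial.natDegree_X_pow]; omega)
        (Nat.lt_succ_self n)
    have e2 : ⟪st10T hcirc ((Polynomial.X : Polynomial ℂ) ^ j),
        st10T hcirc (Polynomial.X * φ n)⟫ = 0 := by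
      have hXp : (Polynomial.X : Polynomial ℂ) ^ j = Polynomial.X * Polynomial.X ^ (j - 1) := by
        have : j = (j - 1) + 1 := by omega
        conv_lhs => rw [this]
        exact pow_succ' _ _
      rw [hXp, st10_inner_X_mul]
      exact st10_inner_low_phi hcirc φ hφ (n-1) n _
        (by rw [Polynomial.natDegree_X_pow]; omega) (by omega)
    rw [hQ, map_sub, inner_sub_right, st10T_C_mul, inner_smul_right, e1, e2, mul_zero, sub_zero]
  have hQS := st10_unique_perp hcirc φ hφ n Q hQdeg hQperp
  have hQ0 : Q.coeff 0 = r * (φ (n+1)).coeff 0 := by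
    rw [hQ, Polynomial.coeff_sub, Polynomial.coeff_C_mul, Polynomial.mul_coeff_zero,
      Polynomial.coeff_X_zero, zero_mul, sub_zero]
  have hval : Q.coeff 0 / conj ((φ n).leadingCoeff) = -(conj (verblunsky φ n)) := by
    have hv : conj (verblunsky φ n)
        = -(((φ (n+1)).leadingCoeff)⁻¹ * (φ (n+1)).coeff 0) := by
      rw [verblunsky, monicOP, map_neg, Complex.conj_conj, Polynomial.eval_mul,
        Polynomial.eval_C, ← Polynomial.coeff_zero_eq_eval_zero]
    rw [hQ0, hv, st10_lead_conj φ hφ n, hr]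
    field_simp
  rw [hval] at hQS
  have hQS' : Q = -(Polynomial.C (conj (verblunsky φ n)) * starPoly n (φ n)) := by
    rw [hQS, map_neg, neg_mul]
  rw [hQ] at hQS'
  linear_combination hQS'

end Szego

section Norms

set_option linter.unusedSectionVars false

open MeasureTheory Polynomial ComplexConjugate

local notation "⟪" x ", " y "⟫" => @inner ℂ _ _ x y

variable {μ : MeasureTheory.Measure ℂ} [MeasureTheory.IsProbabilityMeasure μ]
variable (hcirc : OnCircle μ) (φ : ℕ → Polynomial ℂ) (hφ : IsOPUC μ φ)

include hcirc hφ

lemma st10_norm_star (n : ℕ) : ‖st10T hcirc (starPoly n (φ n))‖ = 1 := by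
  rw [st10T_norm_congr hcirc
    (fun z hz => starPoly_norm_eval n (φ n) (le_of_eq (st10_natDegree φ hφ n)) hz)]
  exact st10_norm_phi hcirc φ hφ n

lemma st10_kappa (n : ℕ) :
    (‖(φ n).leadingCoeff‖ / ‖(φ (n+1)).leadingCoeff‖) ^ 2 = 1 - ‖verblunsky φ n‖ ^ 2 := by
  set r := (φ n).leadingCoeff / (φ (n+1)).leadingCoeff with hrdef
  set α := verblunsky φ n with hadef
  have hX : Polynomial.X * φ n
      = Polynomial.C r * φ (n+1) + Polynomial.C (conj α) * starPoly n (φ n) := by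
    linear_combination -st10_szego hcirc φ hφ n
  have hTX : st10T hcirc (Polynomial.X * φ n)
      = r • st10T hcirc (φ (n+1)) + (conj α) • st10T hcirc (starPoly n (φ n)) := by
    rw [hX, map_add, st10T_C_mul, st10T_C_mul]
  have hnorm1 : ‖st10T hcirc (Polynomial.X * φ n)‖ = 1 := by
    rw [st10_norm_X_mul, st10_norm_phi hcirc φ hφ n]
  have hcross : ⟪st10T hcirc (φ (n+1)), st10T hcirc (starPoly n (φ n))⟫ = 0 :=
    st10_inner_phi_low hcirc φ hφ n (n+1) _
      (starPoly_natDegree_le n _ (le_of_eq (st10_natDegree φ hφ n))) (Nat.lt_succ_self n)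
  have hsq := norm_add_sq (𝕜 := ℂ) (r • st10T hcirc (φ (n+1)))
    ((conj α) • st10T hcirc (starPoly n (φ n)))
  rw [inner_smul_left, inner_smul_right, hcross, mul_zero, mul_zero, map_zero] at hsq
  rw [← hTX, hnorm1, one_pow] at hsq
  rw [norm_smul, norm_smul, st10_norm_phi hcirc φ hφ (n+1), st10_norm_star hcirc φ hφ n,
    mul_one, mul_one, RCLike.norm_conj] at hsq
  have hr : ‖r‖ = ‖(φ n).leadingCoeff‖ / ‖(φ (n+1)).leadingCoeff‖ := norm_div _ _
  rw [hr] at hsq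
  linarith

lemma st10_kappa_mono (n : ℕ) : ‖(φ n).leadingCoeff‖ ≤ ‖(φ (n+1)).leadingCoeff‖ := by
  have h := st10_kappa hcirc φ hφ n
  have h0 : 0 < ‖(φ n).leadingCoeff‖ := norm_pos_iff.2 (st10_lead_ne φ hφ n)
  have h1 : 0 < ‖(φ (n+1)).leadingCoeff‖ := norm_pos_iff.2 (st10_lead_ne φ hφ (n+1))
  have h2 : (‖(φ n).leadingCoeff‖ / ‖(φ (n+1)).leadingCoeff‖) ^ 2 ≤ 1 := by
    rw [h]; nlinarith [sq_nonneg ‖verblunsky φ n‖]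
  have h3 : ‖(φ n).leadingCoeff‖ / ‖(φ (n+1)).leadingCoeff‖ ≤ 1 := by
    nlinarith [div_nonneg h0.le h1.le]
  exact (div_le_one h1).mp h3

lemma st10_alpha_lt_one (n : ℕ) : ‖verblunsky φ n‖ < 1 := by
  have h := st10_kappa hcirc φ hφ n
  have h0 : 0 < ‖(φ n).leadingCoeff‖ := norm_pos_iff.2 (st10_lead_ne φ hφ n)
  have h1 : 0 < ‖(φ (n+1)).leadingCoeff‖ := norm_pos_iff.2 (st10_lead_ne φ hφ (n+1))
  nlinarith [norm_nonneg (verblunsky φ n), div_pos h0 h1,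
    sq_nonneg (‖(φ n).leadingCoeff‖ / ‖(φ (n+1)).leadingCoeff‖)]

lemma st10_phi_succ (n : ℕ) : φ (n+1)
    = Polynomial.C ((φ (n+1)).leadingCoeff / (φ n).leadingCoeff)
      * (Polynomial.X * φ n - Polynomial.C (conj (verblunsky φ n)) * starPoly n (φ n)) := by
  rw [← st10_szego hcirc φ hφ n, ← mul_assoc, ← Polynomial.C_mul]
  have h : (φ (n+1)).leadingCoeff / (φ n).leadingCoeff
      * ((φ n).leadingCoeff / (φ (n+1)).leadingCoeff) = 1 := by
    rw [div_mul_div_comm, mul_comm ((φ (n+1)).leadingCoeff) ((φ n).leadingCoeff)]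
    exact div_self (mul_ne_zero (st10_lead_ne φ hφ n) (st10_lead_ne φ hφ (n+1)))
  rw [h, Polynomial.C_1, one_mul]

lemma st10_star_succ (n : ℕ) : starPoly (n+1) (φ (n+1))
    = Polynomial.C ((φ (n+1)).leadingCoeff / (φ n).leadingCoeff)
      * (starPoly n (φ n) - Polynomial.C (verblunsky φ n) * (Polynomial.X * φ n)) := by
  have hdeg : (φ n).natDegree ≤ n := le_of_eq (st10_natDegree φ hφ n)
  conv_lhs => rw [st10_phi_succ hcirc φ hφ n]
  rw [starPoly_C_mul, starPoly_sub, starPoly_X_mul n (φ n) hdeg, starPoly_C_mul,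
    starPoly_starPoly n (φ n) hdeg, Complex.conj_conj]
  congr 2
  rw [map_div₀, st10_lead_conj φ hφ n, st10_lead_conj φ hφ (n+1)]

omit hφ in
lemma st10_normT_deriv_X_mul (P : Polynomial ℂ) :
    ‖st10T hcirc (Polynomial.derivative (Polynomial.X * P))‖
      ≤ ‖st10T hcirc P‖ + ‖st10T hcirc (Polynomial.derivative P)‖ := by
  have hd : Polynomial.derivative (Polynomial.X * P)
      = P + Polynomial.X * Polynomial.derivative P := by
    rw [Polynomial.derivative_mul, Polynomial.derivative_X, one_mul]
  rw [hd, map_add]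
  refine (norm_add_le _ _).trans ?_
  rw [st10_norm_X_mul]

lemma st10_step_F (n : ℕ) :
    ‖st10T hcirc (Polynomial.derivative (φ (n+1)))‖
      ≤ (‖(φ (n+1)).leadingCoeff‖ / ‖(φ n).leadingCoeff‖)
        * (1 + ‖st10T hcirc (Polynomial.derivative (φ n))‖
          + ‖verblunsky φ n‖ * ‖st10T hcirc (Polynomial.derivative (starPoly n (φ n)))‖) := by
  conv_lhs => rw [st10_phi_succ hcirc φ hφ n]
  rw [Polynomial.derivative_C_mul, st10T_C_mul, norm_smul, norm_div]
  refine mul_le_mul_of_nonneg_left ?_ (by positivity)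
  rw [map_sub, Polynomial.derivative_C_mul]
  rw [map_sub]
  refine (norm_sub_le _ _).trans ?_
  have h1 := st10_normT_deriv_X_mul hcirc (φ n)
  rw [st10_norm_phi hcirc φ hφ n] at h1
  have h2 : ‖st10T hcirc (Polynomial.C (conj (verblunsky φ n))
      * Polynomial.derivative (starPoly n (φ n)))‖
      = ‖verblunsky φ n‖ * ‖st10T hcirc (Polynomial.derivative (starPoly n (φ n)))‖ := by
    rw [st10T_C_mul, norm_smul, RCLike.norm_conj]
  rw [h2]
  linarith

lemma st10_step_G (n : ℕ) :
    ‖st10T hcirc (Polynomial.derivative (starPoly (n+1) (φ (n+1))))‖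
      ≤ (‖(φ (n+1)).leadingCoeff‖ / ‖(φ n).leadingCoeff‖)
        * (‖st10T hcirc (Polynomial.derivative (starPoly n (φ n)))‖
          + ‖verblunsky φ n‖ * (1 + ‖st10T hcirc (Polynomial.derivative (φ n))‖)) := by
  conv_lhs => rw [st10_star_succ hcirc φ hφ n]
  rw [Polynomial.derivative_C_mul, st10T_C_mul, norm_smul, norm_div]
  refine mul_le_mul_of_nonneg_left ?_ (by positivity)
  rw [map_sub, Polynomial.derivative_C_mul, map_sub]
  refine (norm_sub_le _ _).trans ?_
  have h1 := st10_normT_deriv_X_mul hcirc (φ n)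
  rw [st10_norm_phi hcirc φ hφ n] at h1
  have h2 : ‖st10T hcirc (Polynomial.C (verblunsky φ n)
      * Polynomial.derivative (Polynomial.X * φ n))‖
      ≤ ‖verblunsky φ n‖ * (1 + ‖st10T hcirc (Polynomial.derivative (φ n))‖) := by
    rw [st10T_C_mul, norm_smul]
    exact mul_le_mul_of_nonneg_left h1 (norm_nonneg _)
  linarith

lemma st10_lower (n : ℕ) : (n : ℝ) ≤ ‖st10T hcirc (Polynomial.derivative (φ n))‖ := by
  cases n with
  | zero => simpa using norm_nonneg _
  | succ n =>
    have hdeg : (Polynomial.derivative (φ (n+1))).natDegree ≤ n := by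
      have h := Polynomial.natDegree_derivative_le (φ (n+1))
      rw [st10_natDegree φ hφ] at h
      omega
    have hco : (Polynomial.derivative (φ (n+1))).coeff n
        = (φ (n+1)).leadingCoeff * ((n : ℂ)+1) := by
      rw [Polynomial.coeff_derivative, ← st10_coeff_eq_lead φ hφ (n+1)]
    have h1 := st10_inner_top hcirc φ hφ n (Polynomial.derivative (φ (n+1))) hdeg
    rw [hco] at h1
    have h2 := norm_inner_le_norm (𝕜 := ℂ) (st10T hcirc (φ n))
      (st10T hcirc (Polynomial.derivative (φ (n+1))))
    rw [h1, st10_norm_phi hcirc φ hφ n, one_mul] at h2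
    have h0 : 0 < ‖(φ n).leadingCoeff‖ := norm_pos_iff.2 (st10_lead_ne φ hφ n)
    have h1' : 0 < ‖(φ (n+1)).leadingCoeff‖ := norm_pos_iff.2 (st10_lead_ne φ hφ (n+1))
    have h3 : ‖(φ (n+1)).leadingCoeff * ((n : ℂ)+1) / (φ n).leadingCoeff‖
        = ((n:ℝ)+1) * (‖(φ (n+1)).leadingCoeff‖ / ‖(φ n).leadingCoeff‖) := by
      rw [norm_div, norm_mul]
      have : ‖((n : ℂ)+1)‖ = (n:ℝ)+1 := by
        rw [show ((n:ℂ)+1) = ((n+1 : ℕ) : ℂ) by push_cast; ring, RCLike.norm_natCast]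
        push_cast; ring
      rw [this]; ring
    rw [h3] at h2
    have h4 : 1 ≤ ‖(φ (n+1)).leadingCoeff‖ / ‖(φ n).leadingCoeff‖ :=
      (one_le_div h0).mpr (st10_kappa_mono hcirc φ hφ n)
    have h5 : ((n:ℝ)+1) ≤ ((n:ℝ)+1) * (‖(φ (n+1)).leadingCoeff‖ / ‖(φ n).leadingCoeff‖) := by
      nlinarith
    push_cast
    linarith

lemma st10_F0 : ‖st10T hcirc (Polynomial.derivative (φ 0))‖ = 0 := by
  have h : φ 0 = Polynomial.C ((φ 0).coeff 0) :=
    Polynomial.eq_C_of_natDegree_le_zero (le_of_eq (st10_natDegree φ hφ 0))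
  rw [h, Polynomial.derivative_C, map_zero, norm_zero]

lemma st10_G0 : ‖st10T hcirc (Polynomial.derivative (starPoly 0 (φ 0)))‖ = 0 := by
  have h : starPoly 0 (φ 0) = Polynomial.C ((starPoly 0 (φ 0)).coeff 0) :=
    Polynomial.eq_C_of_natDegree_le_zero
      (starPoly_natDegree_le 0 (φ 0) (le_of_eq (st10_natDegree φ hφ 0)))
  rw [h, Polynomial.derivative_C, map_zero, norm_zero]

end Norms

section RecLemma

open Filter Topology

lemma st10_rec_tendsto (g q c : ℕ → ℝ) (Q : ℝ)
    (hg0 : ∀ k, 0 ≤ g k) (hq0 : ∀ k, 0 ≤ q k)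
    (hrec : ∀ k, g (k+1) ≤ q k * g k + c k)
    (hQ0 : 0 ≤ Q) (hQ : Q < 1)
    (hqev : ∀ᶠ k in atTop, q k ≤ Q) (hc : Tendsto c atTop (𝓝 0)) :
    Tendsto g atTop (𝓝 0) := by
  rw [Metric.tendsto_atTop]
  intro ε hε
  obtain ⟨K1, hK1⟩ := Metric.tendsto_atTop.mp hc ((1-Q)*ε/2) (by nlinarith)
  obtain ⟨K2, hK2⟩ := eventually_atTop.mp hqev
  set K := max K1 K2 with hK
  have hcb : ∀ k, K ≤ k → c k ≤ (1-Q)*ε/2 := by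
    intro k hk
    have := hK1 k (le_trans (le_max_left _ _) hk)
    rw [Real.dist_eq, sub_zero] at this
    exact le_of_lt (lt_of_abs_lt this)
  have hqb : ∀ k, K ≤ k → q k ≤ Q := fun k hk => hK2 k (le_trans (le_max_right _ _) hk)
  have claim : ∀ m, g (K + m) ≤ Q ^ m * g K + ε/2 := by
    intro m
    induction m with
    | zero => simp; linarith [hg0 K]
    | succ m ih =>
      have h1 := hrec (K + m)
      have hq := hqb (K+m) (Nat.le_add_right _ _)
      have hcc := hcb (K+m) (Nat.le_add_right _ _)
      have hKm : K + (m+1) = (K+m) + 1 := rfl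
      rw [hKm]
      have h2 : q (K+m) * g (K+m) ≤ Q * (Q^m * g K + ε/2) :=
        mul_le_mul hq ih (hg0 _) hQ0
      have h3 : Q * (Q^m * g K + ε/2) = Q^(m+1) * g K + (ε/2) * Q := by ring
      nlinarith
  have hpow : Tendsto (fun m => Q ^ m * g K) atTop (𝓝 0) := by
    simpa using (tendsto_pow_atTop_nhds_zero_of_lt_one hQ0 hQ).mul_const (g K)
  obtain ⟨M, hM⟩ := Metric.tendsto_atTop.mp hpow (ε/2) (by linarith)
  refine ⟨K + M, fun n hn => ?_⟩
  have h1 : g n ≤ Q ^ (n - K) * g K + ε/2 := by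
    have := claim (n - K)
    rwa [show K + (n - K) = n by omega] at this
  have h2 : Q ^ (n - K) * g K ≤ Q ^ M * g K := by
    refine mul_le_mul_of_nonneg_right ?_ (hg0 K)
    exact pow_le_pow_of_le_one hQ0 hQ.le (by omega)
  have h3 := hM M le_rfl
  rw [Real.dist_eq, sub_zero] at h3
  have h4 : Q ^ M * g K < ε/2 := lt_of_abs_lt h3
  rw [Real.dist_eq, sub_zero]
  rw [abs_of_nonneg (hg0 n)]
  linarith

end RecLemma

section HStep

set_option linter.unusedSectionVars false

open MeasureTheory Polynomial ComplexConjugate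

variable {μ : MeasureTheory.Measure ℂ} [MeasureTheory.IsProbabilityMeasure μ]
variable (hcirc : OnCircle μ) (φ : ℕ → Polynomial ℂ) (hφ : IsOPUC μ φ)

include hcirc hφ

lemma st10_Hstep (n : ℕ) :
    ‖st10T hcirc (Polynomial.derivative (φ (n+1)))‖ - ((n:ℝ)+1)
      + ‖st10T hcirc (Polynomial.derivative (starPoly (n+1) (φ (n+1))))‖
    ≤ ((‖(φ (n+1)).leadingCoeff‖ / ‖(φ n).leadingCoeff‖) * (1 + ‖verblunsky φ n‖))
        * (‖st10T hcirc (Polynomial.derivative (φ n))‖ - (n:ℝ)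
          + ‖st10T hcirc (Polynomial.derivative (starPoly n (φ n)))‖)
      + ((‖(φ (n+1)).leadingCoeff‖ / ‖(φ n).leadingCoeff‖) * (1 + ‖verblunsky φ n‖) - 1)
        * ((n:ℝ)+1) := by
  set C := ‖(φ (n+1)).leadingCoeff‖ / ‖(φ n).leadingCoeff‖ with hC
  set A := ‖verblunsky φ n‖ with hA
  set Fn := ‖st10T hcirc (Polynomial.derivative (φ n))‖ with hFn
  set Gn := ‖st10T hcirc (Polynomial.derivative (starPoly n (φ n)))‖ with hGn
  have e1 := st10_step_F hcirc φ hφ n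
  have e2 := st10_step_G hcirc φ hφ n
  have key : C * (1 + Fn + A * Gn) + C * (Gn + A * (1 + Fn))
      = (C * (1+A)) * (Fn - n + Gn) + (C * (1+A)) * ((n:ℝ)+1) := by ring
  rw [← hC, ← hA, ← hFn, ← hGn] at e1 e2
  linarith

lemma st10_c_one (n : ℕ) (h : verblunsky φ n = 0) :
    ‖(φ (n+1)).leadingCoeff‖ / ‖(φ n).leadingCoeff‖ = 1 := by
  have hk := st10_kappa hcirc φ hφ n
  rw [h, norm_zero] at hk
  have h0 : 0 < ‖(φ n).leadingCoeff‖ := norm_pos_iff.2 (st10_lead_ne φ hφ n)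
  have h1 : 0 < ‖(φ (n+1)).leadingCoeff‖ := norm_pos_iff.2 (st10_lead_ne φ hφ (n+1))
  have h2 : (‖(φ n).leadingCoeff‖ / ‖(φ (n+1)).leadingCoeff‖) = 1 := by
    nlinarith [div_pos h0 h1]
  rw [div_eq_one_iff_eq h1.ne'] at h2
  rw [← h2, div_self h0.ne']

lemma st10_c_sqrt (n : ℕ) :
    ‖(φ (n+1)).leadingCoeff‖ / ‖(φ n).leadingCoeff‖
      = (Real.sqrt (1 - ‖verblunsky φ n‖^2))⁻¹ := by
  have hk := st10_kappa hcirc φ hφ n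
  have h0 : 0 < ‖(φ n).leadingCoeff‖ := norm_pos_iff.2 (st10_lead_ne φ hφ n)
  have h1 : 0 < ‖(φ (n+1)).leadingCoeff‖ := norm_pos_iff.2 (st10_lead_ne φ hφ (n+1))
  have hs : Real.sqrt (1 - ‖verblunsky φ n‖^2)
      = ‖(φ n).leadingCoeff‖ / ‖(φ (n+1)).leadingCoeff‖ := by
    rw [← hk, Real.sqrt_sq (div_nonneg h0.le h1.le)]
  rw [hs, inv_div]

end HStep

open MeasureTheory Polynomial Filter Topology ComplexConjugate in
theorem stmt10' (N : ℕ → ℕ) (hN0 : 0 < N 0) (hNmono : StrictMono N)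
    (hratio : Filter.limsup (fun k : ℕ => (N k : ℝ) / N (k + 1)) atTop < 1)
    (β : ℕ → ℂ) (hβ : ∀ k, ‖β k‖ < 1) (hβ0 : Tendsto β atTop (𝓝 0))
    (μ : Measure ℂ) [IsProbabilityMeasure μ] (hcirc : OnCircle μ)
    (hnt : NontrivialSupport μ) (φ : ℕ → Polynomial ℂ) (hφ : IsOPUC μ φ)
    (hα1 : ∀ k : ℕ, verblunsky φ (N k - 1) = β k)
    (hα2 : ∀ j : ℕ, (∀ k : ℕ, j ≠ N k - 1) → verblunsky φ j = 0) :
    NormalBehavior μ φ := by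
  classical
  have hNpos : ∀ k, 0 < N k := fun k => lt_of_lt_of_le hN0 (hNmono.monotone (Nat.zero_le k))
  have hNlt : ∀ k, k < N k := by
    intro k
    induction k with
    | zero => exact hN0
    | succ k ih => have := hNmono (show k < k + 1 by omega); omega
  set F : ℕ → ℝ := fun n => ‖st10T hcirc (Polynomial.derivative (φ n))‖ with hFd
  set G : ℕ → ℝ := fun n => ‖st10T hcirc (Polynomial.derivative (starPoly n (φ n)))‖ with hGd
  set H : ℕ → ℝ := fun n => F n - n + G n with hHd
  set Γ : ℕ → ℝ := fun k => (1 + ‖β k‖) / Real.sqrt (1 - ‖β k‖^2) with hΓd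
  have hH0 : ∀ n, 0 ≤ H n := by
    intro n
    have h1 := st10_lower hcirc φ hφ n
    have h2 : (0:ℝ) ≤ ‖st10T hcirc (Polynomial.derivative (starPoly n (φ n)))‖ := norm_nonneg _
    simp only [hHd, hFd, hGd]
    linarith
  have hstep0 : ∀ n, verblunsky φ n = 0 → H (n+1) ≤ H n := by
    intro n h
    have hs := st10_Hstep hcirc φ hφ n
    rw [st10_c_one hcirc φ hφ n h, h, norm_zero] at hs
    simp only [hHd, hFd, hGd]
    push_cast
    linarith
  have hjump : ∀ k, H (N k) ≤ Γ k * H (N k - 1) + (Γ k - 1) * (N k : ℝ) := by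
    intro k
    have hm : N k - 1 + 1 = N k := Nat.succ_pred_eq_of_pos (hNpos k)
    have hs := st10_Hstep hcirc φ hφ (N k - 1)
    rw [st10_c_sqrt hcirc φ hφ (N k - 1), hα1 k, hm] at hs
    have hcast : ((N k - 1 : ℕ) : ℝ) + 1 = (N k : ℝ) := by
      rw [Nat.cast_sub (by omega : 1 ≤ N k)]; push_cast; ring
    rw [hcast] at hs
    have hΓeq : (Real.sqrt (1 - ‖β k‖^2))⁻¹ * (1 + ‖β k‖) = Γ k := by
      simp only [hΓd]; rw [div_eq_mul_inv]; ring
    rw [hΓeq] at hs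
    simp only [hHd, hFd, hGd]
    exact hs
  have hblock : ∀ k n, N k ≤ n → n ≤ N (k+1) - 1 → H n ≤ H (N k) := by
    intro k n
    induction n with
    | zero => intro h1 _; exact absurd h1 (by have := hNpos k; omega)
    | succ n ih =>
      intro h1 h2
      rcases eq_or_lt_of_le h1 with he | hlt
      · rw [he]
      · have hn : N k ≤ n := by omega
        have hone : verblunsky φ n = 0 := by
          apply hα2
          intro i hi
          have hNi : N i = n + 1 := by have := hNpos i; omega
          have h3 : N k < N i := by omega
          have h4 : N i < N (k+1) := by have := hNpos (k+1); omega
          have h5 : k < i := hNmono.lt_iff_lt.mp h3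
          have h6 : i < k+1 := hNmono.lt_iff_lt.mp h4
          omega
        exact le_trans (hstep0 n hone) (ih hn (by omega))
  have hNcast : ∀ k, (0:ℝ) < (N k : ℝ) := fun k => by exact_mod_cast hNpos k
  set hseq : ℕ → ℝ := fun k => H (N k) / N k with hhd
  have hh0 : ∀ k, 0 ≤ hseq k := fun k => div_nonneg (hH0 _) (hNcast k).le
  have hΓpos : ∀ k, 0 ≤ Γ k := by
    intro k
    simp only [hΓd]
    exact div_nonneg (by positivity) (Real.sqrt_nonneg _)
  have hrec : ∀ k, hseq (k+1) ≤ (Γ (k+1) * ((N k : ℝ)/(N (k+1) : ℝ))) * hseq k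
      + (Γ (k+1) - 1) := by
    intro k
    have h1 := hjump (k+1)
    have h2 : H (N (k+1) - 1) ≤ H (N k) := by
      refine hblock k (N (k+1) - 1) ?_ le_rfl
      have := hNmono (show k < k + 1 by omega); omega
    have h3 : H (N (k+1)) ≤ Γ (k+1) * H (N k) + (Γ (k+1) - 1) * (N (k+1) : ℝ) := by
      have := mul_le_mul_of_nonneg_left h2 (hΓpos (k+1)); linarith
    have key : (Γ (k+1) * H (N k) + (Γ (k+1) - 1) * ((N (k+1):ℕ) : ℝ)) / ((N (k+1):ℕ) : ℝ)
        = (Γ (k+1) * ((N k : ℝ)/(N (k+1) : ℝ))) * (H (N k)/(N k : ℝ)) + (Γ (k+1) - 1) := by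
      have hka : ((N k : ℕ):ℝ) ≠ 0 := (hNcast k).ne'
      have hkb : ((N (k+1) : ℕ):ℝ) ≠ 0 := (hNcast (k+1)).ne'
      field_simp
    calc hseq (k+1) = H (N (k+1)) / ((N (k+1):ℕ) : ℝ) := rfl
      _ ≤ (Γ (k+1) * H (N k) + (Γ (k+1) - 1) * ((N (k+1):ℕ) : ℝ)) / ((N (k+1):ℕ) : ℝ) :=
          (div_le_div_iff_of_pos_right (hNcast (k+1))).mpr h3
      _ = _ := key
  have hbn : Tendsto (fun k => ‖β k‖) atTop (𝓝 0) := by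
    have := hβ0.norm
    simpa using this
  have hΓtend : Tendsto Γ atTop (𝓝 1) := by
    have h1 : Tendsto (fun k => 1 + ‖β k‖) atTop (𝓝 (1:ℝ)) := by
      have := (tendsto_const_nhds : Tendsto (fun _ : ℕ => (1:ℝ)) atTop (𝓝 1)).add hbn
      simpa using this
    have h2 : Tendsto (fun k => Real.sqrt (1 - ‖β k‖^2)) atTop (𝓝 1) := by
      have h3 : Tendsto (fun k => 1 - ‖β k‖^2) atTop (𝓝 (1:ℝ)) := by
        have := (tendsto_const_nhds : Tendsto (fun _ : ℕ => (1:ℝ)) atTop (𝓝 1)).sub (hbn.pow 2)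
        simpa using this
      have h4 := (Real.continuous_sqrt.tendsto 1).comp h3
      rw [Real.sqrt_one] at h4; exact h4
    have h5 := h1.div h2 one_ne_zero
    rw [div_one] at h5; exact h5
  have hub : ∀ k, (N k : ℝ)/(N (k+1):ℝ) ≤ 1 := by
    intro k
    rw [div_le_one (hNcast (k+1))]
    exact_mod_cast (hNmono (Nat.lt_succ_self k)).le
  set L := limsup (fun k : ℕ => (N k : ℝ) / N (k + 1)) atTop with hL
  set θ : ℝ := max (1/2) ((L+1)/2) with hθ
  have hθ1 : θ < 1 := by
    rw [hθ]
    apply max_lt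
    · norm_num
    · linarith [hratio]
  have hθ0 : (0:ℝ) < θ := lt_of_lt_of_le (by norm_num) (le_max_left _ _)
  have hLθ : L < θ := lt_of_lt_of_le (by linarith [hratio]) (le_max_right _ _)
  have hevr : ∀ᶠ k in atTop, (N k : ℝ)/(N (k+1):ℝ) < θ := by
    refine eventually_lt_of_limsup_lt ?_ ?_
    · rw [← hL]; exact hLθ
    · exact Filter.isBoundedUnder_of ⟨1, fun k => hub k⟩
  set Q : ℝ := (1+θ)/2 with hQd
  have hQ1 : Q < 1 := by rw [hQd]; linarith
  have hQ0 : (0:ℝ) ≤ Q := by rw [hQd]; linarith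
  set δ : ℝ := (1-θ)/(2*θ) with hδ
  have hδ0 : 0 < δ := by apply div_pos <;> linarith
  have hevΓ : ∀ᶠ k in atTop, Γ k ≤ 1 + δ := by
    obtain ⟨K, hK⟩ := Metric.tendsto_atTop.mp hΓtend δ hδ0
    refine eventually_atTop.2 ⟨K, fun k hk => ?_⟩
    have := hK k hk
    rw [Real.dist_eq] at this
    have := (abs_lt.mp this).2
    linarith
  have hevΓ' : ∀ᶠ k in atTop, Γ (k+1) ≤ 1 + δ := by
    obtain ⟨K, hK⟩ := eventually_atTop.mp hevΓ
    exact eventually_atTop.2 ⟨K, fun k hk => hK (k+1) (by omega)⟩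
  have hqev : ∀ᶠ k in atTop, (Γ (k+1) * ((N k : ℝ)/(N (k+1):ℝ))) ≤ Q := by
    filter_upwards [hevΓ', hevr] with k h1 h2
    have h3 : Γ (k+1) * ((N k:ℝ)/(N (k+1):ℝ)) ≤ (1+δ) * θ :=
      mul_le_mul h1 h2.le (div_nonneg (hNcast k).le (hNcast (k+1)).le) (by linarith)
    have h4 : (1+δ) * θ = Q := by
      rw [hδ, hQd]
      field_simp
      ring
    linarith
  have hq0 : ∀ k, 0 ≤ Γ (k+1) * ((N k:ℝ)/(N (k+1):ℝ)) :=
    fun k => mul_nonneg (hΓpos _) (div_nonneg (hNcast k).le (hNcast (k+1)).le)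
  have hctend : Tendsto (fun k => Γ (k+1) - 1) atTop (𝓝 0) := by
    have h5 : Tendsto (fun k : ℕ => Γ (k+1)) atTop (𝓝 1) := hΓtend.comp (tendsto_add_atTop_nat 1)
    have h6 := h5.sub_const 1
    simpa using h6
  have hhtend : Tendsto hseq atTop (𝓝 0) :=
    st10_rec_tendsto hseq _ _ Q hh0 hq0 hrec hQ0 hQ1 hqev hctend
  set kf : ℕ → ℕ := fun n => Nat.findGreatest (fun k => N k ≤ n) n with hkfd
  have hkf1 : ∀ n, N 0 ≤ n → N (kf n) ≤ n := by
    intro n hn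
    rcases Nat.eq_zero_or_pos (kf n) with h0 | h0
    · rw [h0]; exact hn
    · exact Nat.findGreatest_of_ne_zero (P := fun k => N k ≤ n) (n := n) (m := kf n) rfl (by omega)
  have hkf2 : ∀ n, N 0 ≤ n → n < N (kf n + 1) := by
    intro n hn
    by_contra hcon
    push_neg at hcon
    have h1 : kf n + 1 ≤ n := by have := hNlt (kf n + 1); omega
    exact Nat.findGreatest_is_greatest (Nat.lt_succ_self _) h1 hcon
  have hkftop : Tendsto kf atTop atTop := by
    rw [tendsto_atTop_atTop]
    intro m
    exact ⟨N m, fun n hn => Nat.le_findGreatest (le_trans (hNlt m).le hn) hn⟩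
  have hbound : ∀ᶠ n in atTop, ‖F n / n - 1‖ ≤ hseq (kf n) := by
    rw [eventually_atTop]
    refine ⟨N 0, fun n hn => ?_⟩
    have hn0 : 0 < n := lt_of_lt_of_le (hNpos 0) hn
    have hk1 := hkf1 n hn
    have hk2 := hkf2 n hn
    have hHn : H n ≤ H (N (kf n)) := hblock (kf n) n hk1 (by omega)
    have hlow := st10_lower hcirc φ hφ n
    have hGn : (0:ℝ) ≤ ‖st10T hcirc (Polynomial.derivative (starPoly n (φ n)))‖ := norm_nonneg _
    have hFn : 0 ≤ F n - (n:ℝ) := by simp only [hFd]; linarith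
    have hnR : (0:ℝ) < (n:ℝ) := by exact_mod_cast hn0
    have hNkf : (0:ℝ) < (N (kf n) : ℝ) := hNcast _
    have hNkfn : ((N (kf n):ℕ) : ℝ) ≤ (n:ℝ) := by exact_mod_cast hk1
    have hFH : F n - (n:ℝ) ≤ H (N (kf n)) := by
      refine le_trans ?_ hHn
      simp only [hHd, hGd]
      linarith
    have heq : ‖F n / (n:ℝ) - 1‖ = (F n - (n:ℝ))/(n:ℝ) := by
      have he2 : F n / (n:ℝ) - 1 = (F n - (n:ℝ))/(n:ℝ) := by field_simp
      rw [Real.norm_eq_abs, he2, abs_of_nonneg (div_nonneg hFn hnR.le)]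
    rw [heq]
    calc (F n - (n:ℝ))/(n:ℝ) ≤ H (N (kf n))/(n:ℝ) := (div_le_div_iff_of_pos_right hnR).mpr hFH
      _ ≤ H (N (kf n)) / ((N (kf n):ℕ):ℝ) := div_le_div_of_nonneg_left (hH0 _) hNkf hNkfn
      _ = hseq (kf n) := rfl
  have htendF : Tendsto (fun n : ℕ => F n / n - 1) atTop (𝓝 0) :=
    squeeze_zero_norm' hbound (hhtend.comp hkftop)
  have hfinal : Tendsto (fun n : ℕ => F n / n) atTop (𝓝 1) := by
    have := htendF.add_const 1
    simpa using this
  show Tendsto (fun n : ℕ => l2norm μ (Polynomial.derivative (φ n)) / n) atTop (𝓝 1)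
  have hfun : (fun n : ℕ => l2norm μ (Polynomial.derivative (φ n)) / n)
      = fun n : ℕ => F n / n := by
    funext n
    simp only [hFd]
    rw [st10T_norm hcirc]
  rw [hfun]
  exact hfinal


/-- **sparse Verblunsky coefficients.** If `limsup N_k/N_{k+1} < 1`,
`β_k ∈ 𝔻`, `β_k → 0`, and the Verblunsky coefficients of `μ` are the associated
sparse sequence, then `μ` has normal derivative behavior. -/
theorem stmt10 (N : ℕ → ℕ) (hN0 : 0 < N 0) (hNmono : StrictMono N)
    (hratio : Filter.limsup (fun k : ℕ => (N k : ℝ) / N (k + 1)) atTop < 1)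
    (β : ℕ → ℂ) (hβ : ∀ k, ‖β k‖ < 1) (hβ0 : Tendsto β atTop (𝓝 0))
    (μ : Measure ℂ) [IsProbabilityMeasure μ] (hcirc : OnCircle μ)
    (hnt : NontrivialSupport μ) (φ : ℕ → Polynomial ℂ) (hφ : IsOPUC μ φ)
    (hα1 : ∀ k : ℕ, verblunsky φ (N k - 1) = β k)
    (hα2 : ∀ j : ℕ, (∀ k : ℕ, j ≠ N k - 1) → verblunsky φ j = 0) :
    NormalBehavior μ φ := by
  exact stmt10' N hN0 hNmono hratio β hβ hβ0 μ hcirc hnt φ hφ hα1 hα2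
end
end
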